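/- arXiv:math/0406179 — 6 statements merged into one kernel-verified Lean document; each statement's English description precedes it below -/
import Mathlib

section
/- Every continuous bounded map f : R → R from the closed long ray to itself is eventually constant: there exists z ∈ R such that f is constant on [z, ω₁). -/
open Set Topology
noncomputable section

/-- The first uncountable ordinal ω₁. -/
def omega1 : Ordinal := Ordinal.omega 1

/-- The closed long ray `R = W(ω₁) × [0,1)` with the lexicographic order. -/
def LongRay : Type 1 := {o : Ordinal // o < omega1} ×ₗ (Set.Ico (0:ℝ) 1)

instance : LinearOrder LongRay :=
  inferInstanceAs (LinearOrder ({o : Ordinal // o < omega1} ×ₗ (Set.Ico (0:ℝ) 1)))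

/-- The order topology on the long ray. -/
instance : TopologicalSpace LongRay := Preorder.topology LongRay
instance : OrderTopology LongRay := ⟨rfl⟩

/-- The minimum point `(0,0)` of the long ray. -/
instance : Zero LongRay :=
  ⟨toLex (⟨0, Ordinal.omega_pos 1⟩, ⟨0, by constructor <;> norm_num⟩)⟩

/-- A map `R → R` is cofinal if its image is unbounded in `R`. -/
def Cofinal (f : LongRay → LongRay) : Prop := ∀ b, ∃ x, b ≤ f x

/-- A map `R → R` is bounded if its image has an upper bound in `R`. -/
def BddMap (f : LongRay → LongRay) : Prop := ∃ b, ∀ x, f x ≤ b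

namespace LR

lemma omega1_isLimit : Order.IsSuccLimit omega1 := Cardinal.isSuccLimit_omega 1

lemma succ_lt_omega1 {o : Ordinal} (h : o < omega1) : o + 1 < omega1 := by
  simpa using omega1_isLimit.succ_lt h

/-- first coordinate, as an ordinal -/
def fst (x : LongRay) : Ordinal := ((ofLex x).1 : Ordinal)
lemma fst_lt (x : LongRay) : fst x < omega1 := (ofLex x).1.2
/-- second coordinate, as a real -/
def snd (x : LongRay) : ℝ := ((ofLex x).2 : ℝ)
lemma snd_mem (x : LongRay) : 0 ≤ snd x ∧ snd x < 1 := (ofLex x).2.2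

abbrev mkLR (o : Ordinal) (ho : o < omega1) (t : ℝ) (ht : t ∈ Set.Ico (0:ℝ) 1) : LongRay :=
  toLex (⟨o, ho⟩, ⟨t, ht⟩)

@[simp] lemma fst_mk (o ho t ht) : fst (mkLR o ho t ht) = o := rfl
@[simp] lemma snd_mk (o ho t ht) : snd (mkLR o ho t ht) = t := rfl

lemma le_iff' (x y : LongRay) : x ≤ y ↔ fst x < fst y ∨ (fst x = fst y ∧ snd x ≤ snd y) := by
  have h := Prod.Lex.le_iff (x := (x : {o : Ordinal // o < omega1} ×ₗ (Set.Ico (0:ℝ) 1))) (y := y)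
  constructor
  · intro hxy
    rcases h.1 hxy with h1 | ⟨h1, h2⟩
    · exact Or.inl h1
    · exact Or.inr ⟨congrArg Subtype.val h1, h2⟩
  · intro hxy
    apply h.2
    rcases hxy with h1 | ⟨h1, h2⟩
    · exact Or.inl h1
    · exact Or.inr ⟨Subtype.ext h1, h2⟩

lemma lt_iff' (x y : LongRay) : x < y ↔ fst x < fst y ∨ (fst x = fst y ∧ snd x < snd y) := by
  have h := Prod.Lex.lt_iff (x := (x : {o : Ordinal // o < omega1} ×ₗ (Set.Ico (0:ℝ) 1))) (y := y)
  constructor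
  · intro hxy
    rcases h.1 hxy with h1 | ⟨h1, h2⟩
    · exact Or.inl h1
    · exact Or.inr ⟨congrArg Subtype.val h1, h2⟩
  · intro hxy
    apply h.2
    rcases hxy with h1 | ⟨h1, h2⟩
    · exact Or.inl h1
    · exact Or.inr ⟨Subtype.ext h1, h2⟩

lemma fst_le_of_le {x y : LongRay} (h : x ≤ y) : fst x ≤ fst y := by
  rcases (le_iff' x y).1 h with h1 | ⟨h1, _⟩
  · exact h1.le
  · exact h1.le

lemma zero_le' (x : LongRay) : (0:LongRay) ≤ x := by
  rw [le_iff' 0 x]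
  rcases eq_or_lt_of_le (zero_le : (0:Ordinal) ≤ fst x) with h | h
  · exact Or.inr ⟨h.symm ▸ rfl, (snd_mem x).1⟩
  · exact Or.inl h

@[simp] lemma fst_zero : fst (0:LongRay) = 0 := rfl
@[simp] lemma snd_zero : snd (0:LongRay) = 0 := rfl

lemma exists_gt (x : LongRay) : ∃ y, x < y := by
  refine ⟨mkLR (fst x + 1) (succ_lt_omega1 (fst_lt x)) 0 (by norm_num), ?_⟩
  rw [lt_iff']
  exact Or.inl (by simpa using lt_add_one (fst x))

lemma dense' {x y : LongRay} (h : x < y) : ∃ c, x < c ∧ c < y := by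
  rcases (lt_iff' x y).1 h with h1 | ⟨h1, h2⟩
  · have hs := snd_mem x
    refine ⟨mkLR (fst x) (fst_lt x) ((snd x + 1)/2) (Set.mem_Ico.2 ⟨by linarith [hs.1], by linarith [hs.2]⟩), ?_, ?_⟩
    · rw [lt_iff']; exact Or.inr ⟨rfl, by simp; linarith [hs.2]⟩
    · rw [lt_iff']; exact Or.inl (by simpa using h1)
  · refine ⟨mkLR (fst x) (fst_lt x) ((snd x + snd y)/2)
      (Set.mem_Ico.2 ⟨by linarith [(snd_mem x).1], by linarith [(snd_mem y).2]⟩), ?_, ?_⟩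
    · rw [lt_iff']; exact Or.inr ⟨rfl, by simp; linarith⟩
    · rw [lt_iff']; exact Or.inr ⟨by simpa using h1, by simp; linarith⟩

/-- Every countable sequence in the long ray is bounded above. -/
lemma countable_bdd (u : ℕ → LongRay) : ∃ b, ∀ n, u n ≤ b := by
  have hγ : (⨆ n, fst (u n) + 1) < omega1 := by
    have : omega1 = (Cardinal.aleph 1).ord := (Cardinal.ord_aleph 1).symm
    rw [this]
    exact (Cardinal.ord_aleph 1) ▸ Ordinal.iSup_lt_omega_one (fun n => by
      exact succ_lt_omega1 (fst_lt (u n)))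
  refine ⟨mkLR _ hγ 0 (by norm_num), fun n => ?_⟩
  rw [le_iff']
  refine Or.inl ?_
  simp only [fst_mk]
  calc fst (u n) < fst (u n) + 1 := lt_add_one _
    _ ≤ ⨆ n, fst (u n) + 1 := Ordinal.le_iSup (fun n => fst (u n) + 1) n


/-- Existence of least upper bounds for nonempty bounded sets. -/
lemma exists_isLUB {S : Set LongRay} (hne : S.Nonempty) (hbd : BddAbove S) :
    ∃ x, IsLUB S x := by
  obtain ⟨B, hB⟩ := hbd
  set A : Set Ordinal := fst '' S with hA
  have hAne : A.Nonempty := hne.image _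
  have hAbd : BddAbove A := ⟨fst B, by rintro _ ⟨x, hx, rfl⟩; exact fst_le_of_le (hB hx)⟩
  set γ : Ordinal := sSup A with hγdef
  have hγ : γ < omega1 := lt_of_le_of_lt (csSup_le hAne (by
      rintro _ ⟨x, hx, rfl⟩; exact fst_le_of_le (hB hx))) (fst_lt B)
  by_cases hmem : γ ∈ A
  · -- attained: look at second coordinates
    set T : Set ℝ := snd '' (S ∩ {x | fst x = γ}) with hT
    obtain ⟨x₀, hx₀S, hx₀γ⟩ := hmem
    have hTne : T.Nonempty := ⟨snd x₀, x₀, ⟨hx₀S, hx₀γ⟩, rfl⟩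
    have hTbd : BddAbove T := ⟨1, by rintro _ ⟨x, _, rfl⟩; exact (snd_mem x).2.le⟩
    set r : ℝ := sSup T with hrdef
    have hr0 : 0 ≤ r := le_csSup hTbd (⟨x₀, ⟨hx₀S, hx₀γ⟩, rfl⟩ : snd x₀ ∈ T) |>.trans' (snd_mem x₀).1
    have hr1 : r ≤ 1 := csSup_le hTne (by rintro _ ⟨x, _, rfl⟩; exact (snd_mem x).2.le)
    -- upper-bound facts
    have hub : ∀ x ∈ S, fst x ≤ γ := fun x hx => le_csSup hAbd ⟨x, hx, rfl⟩
    rcases lt_or_eq_of_le hr1 with hrlt | hreq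
    · refine ⟨mkLR γ hγ r (Set.mem_Ico.2 ⟨hr0, hrlt⟩), ?_, ?_⟩
      · intro x hx
        rw [le_iff']
        rcases lt_or_eq_of_le (hub x hx) with h | h
        · exact Or.inl (by simpa using h)
        · exact Or.inr ⟨by simpa using h, by
            simpa using le_csSup hTbd (⟨x, ⟨hx, h⟩, rfl⟩ : snd x ∈ T)⟩
      · intro w hw
        have hwγ : γ ≤ fst w := by
          have := fst_le_of_le (hw hx₀S); rwa [hx₀γ] at this
        rw [le_iff']
        rcases lt_or_eq_of_le hwγ with h | h
        · exact Or.inl (by simpa using h)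
        · refine Or.inr ⟨by simpa using h, ?_⟩
          simp only [snd_mk]
          refine csSup_le hTne ?_
          rintro _ ⟨x, ⟨hxS, hxγ⟩, rfl⟩
          have := hw hxS
          rcases (le_iff' x w).1 this with h1 | ⟨_, h2⟩
          · exact absurd (hxγ ▸ h1) (by rw [← h]; exact lt_irrefl γ)
          · exact h2
    · -- r = 1 : lub is (γ+1, 0)
      refine ⟨mkLR (γ+1) (succ_lt_omega1 hγ) 0 (by norm_num), ?_, ?_⟩
      · intro x hx
        rw [le_iff']
        exact Or.inl (by simpa using lt_of_le_of_lt (hub x hx) (lt_add_one γ))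
      · intro w hw
        have hwγ : γ ≤ fst w := by
          have := fst_le_of_le (hw hx₀S); rwa [hx₀γ] at this
        have hwγ' : γ < fst w := by
          rcases lt_or_eq_of_le hwγ with h | h
          · exact h
          · exfalso
            have hsw : snd w < 1 := (snd_mem w).2
            rw [← hreq] at hsw
            obtain ⟨t, htT, hts⟩ := exists_lt_of_lt_csSup hTne hsw
            obtain ⟨x, ⟨hxS, hxγ⟩, rfl⟩ := htT
            have hle := hw hxS
            rcases (le_iff' x w).1 hle with h1 | ⟨_, h2⟩
            · rw [hxγ, ← h] at h1; exact lt_irrefl _ h1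
            · linarith
        rw [le_iff']
        rcases lt_or_eq_of_le (by rw [Ordinal.add_one_eq_succ]; exact Order.succ_le_of_lt hwγ' : γ + 1 ≤ fst w) with h | h
        · exact Or.inl (by simpa using h)
        · exact Or.inr ⟨by simpa using h, by simpa using (snd_mem w).1⟩
  · -- not attained: lub is (γ, 0)
    refine ⟨mkLR γ hγ 0 (by norm_num), ?_, ?_⟩
    · intro x hx
      have : fst x ≤ γ := le_csSup hAbd ⟨x, hx, rfl⟩
      rcases lt_or_eq_of_le this with h | h
      · rw [le_iff']; exact Or.inl (by simpa using h)
      · exact absurd (⟨x, hx, h⟩ : γ ∈ A) hmem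
    · intro w hw
      have hwγ : γ ≤ fst w := csSup_le hAne (by
        rintro _ ⟨x, hx, rfl⟩; exact fst_le_of_le (hw hx))
      rw [le_iff']
      rcases lt_or_eq_of_le hwγ with h | h
      · exact Or.inl (by simpa using h)
      · exact Or.inr ⟨by simpa using h, by simpa using (snd_mem w).1⟩

/-- Existence of greatest lower bounds for nonempty sets. -/
lemma exists_isGLB {S : Set LongRay} (hne : S.Nonempty) : ∃ x, IsGLB S x := by
  set A : Set Ordinal := fst '' S with hA
  have hAne : A.Nonempty := hne.image _
  set γ : Ordinal := sInf A with hγdef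
  have hmem : γ ∈ A := csInf_mem hAne
  obtain ⟨x₀, hx₀S, hx₀γ⟩ := hmem
  have hγ : γ < omega1 := hx₀γ ▸ fst_lt x₀
  set T : Set ℝ := snd '' (S ∩ {x | fst x = γ}) with hT
  have hTne : T.Nonempty := ⟨snd x₀, x₀, ⟨hx₀S, hx₀γ⟩, rfl⟩
  have hTbd : BddBelow T := ⟨0, by rintro _ ⟨x, _, rfl⟩; exact (snd_mem x).1⟩
  set r : ℝ := sInf T with hrdef
  have hr0 : 0 ≤ r := le_csInf hTne (by rintro _ ⟨x, _, rfl⟩; exact (snd_mem x).1)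
  have hr1 : r < 1 :=
    lt_of_le_of_lt (csInf_le hTbd (⟨x₀, ⟨hx₀S, hx₀γ⟩, rfl⟩ : snd x₀ ∈ T)) (snd_mem x₀).2
  refine ⟨mkLR γ hγ r (Set.mem_Ico.2 ⟨hr0, hr1⟩), ?_, ?_⟩
  · intro x hx
    have : γ ≤ fst x := csInf_le (⟨0, fun a _ => zero_le⟩) ⟨x, hx, rfl⟩
    rw [le_iff']
    rcases lt_or_eq_of_le this with h | h
    · exact Or.inl (by simpa using h)
    · exact Or.inr ⟨by simpa using h, by
        simpa using csInf_le hTbd (⟨x, ⟨hx, h.symm⟩, rfl⟩ : snd x ∈ T)⟩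
  · intro w hw
    have hwγ : fst w ≤ γ := by
      have := fst_le_of_le (hw hx₀S); rwa [hx₀γ] at this
    rw [le_iff']
    rcases lt_or_eq_of_le hwγ with h | h
    · exact Or.inl (by simpa using h)
    · refine Or.inr ⟨by simpa using h, ?_⟩
      simp only [snd_mk]
      refine le_csInf hTne ?_
      rintro _ ⟨x, ⟨hxS, hxγ⟩, rfl⟩
      rcases (le_iff' w x).1 (hw hxS) with h1 | ⟨_, h2⟩
      · rw [hxγ, h] at h1; exact absurd h1 (lt_irrefl γ)
      · exact h2


lemma one_div_seq (ε : ℝ) (hε : 0 < ε) : ∃ n : ℕ, (1:ℝ) / (n + 2) < ε := by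
  obtain ⟨n, hn⟩ := exists_nat_one_div_lt hε
  exact ⟨n, by
    apply lt_of_le_of_lt _ hn
    apply one_div_le_one_div_of_le (by positivity)
    push_cast; linarith⟩

/-- A countable coinitial family above any point. -/
lemma coinitial_above (L : LongRay) :
    ∃ seq : ℕ → LongRay, (∀ n, L < seq n) ∧ (∀ y, L < y → ∃ n, seq n ≤ y) := by
  set t := snd L with ht
  have htm := snd_mem L
  have hmem : ∀ n : ℕ, t + (1 - t) / (n + 2) ∈ Set.Ico (0:ℝ) 1 := by
    intro n
    constructor
    · have : (0:ℝ) ≤ (1 - t) / (n + 2) := by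
        apply div_nonneg (by linarith [htm.2]) (by positivity)
      linarith [htm.1]
    · have h2 : (1 - t) / (n + 2) < 1 - t := by
        apply div_lt_self (by linarith [htm.2])
        have : (0:ℝ) ≤ n := Nat.cast_nonneg n
        linarith
      linarith
  refine ⟨fun n => mkLR (fst L) (fst_lt L) (t + (1 - t) / (n + 2)) (hmem n), ?_, ?_⟩
  · intro n
    rw [lt_iff']
    refine Or.inr ⟨rfl, ?_⟩
    simp only [snd_mk, ← ht]
    have : (0:ℝ) < (1 - t) / (n + 2) := by
      apply div_pos (by linarith [htm.2]) (by positivity)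
    linarith
  · intro y hy
    rcases (lt_iff' L y).1 hy with h1 | ⟨h1, h2⟩
    · exact ⟨0, by rw [le_iff']; exact Or.inl (by simpa using h1)⟩
    · obtain ⟨n, hn⟩ := one_div_seq (snd y - t) (by rw [ht]; linarith)
      refine ⟨n, ?_⟩
      rw [le_iff']
      refine Or.inr ⟨by simpa using h1, ?_⟩
      simp only [snd_mk]
      have hd : (1 - t) / (n + 2) ≤ 1 / (n + 2) := by
        gcongr
        linarith [htm.1]
      linarith

lemma ext' {x y : LongRay} (h1 : fst x = fst y) (h2 : snd x = snd y) : x = y :=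
  le_antisymm ((le_iff' _ _).2 (Or.inr ⟨h1, h2.le⟩)) ((le_iff' _ _).2 (Or.inr ⟨h1.symm, h2.ge⟩))

/-- A countable cofinal family below any nonzero point. -/
lemma cofinal_below (M : LongRay) (hM : M ≠ 0) :
    ∃ seq : ℕ → LongRay, (∀ n, seq n < M) ∧ (∀ y, y < M → ∃ n, y ≤ seq n) := by
  set t := snd M with ht
  have htm := snd_mem M
  rcases lt_or_eq_of_le htm.1 with htpos | ht0
  · -- t > 0
    have hmem : ∀ n : ℕ, t - t / (n + 2) ∈ Set.Ico (0:ℝ) 1 := by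
      intro n
      have h1 : t / (n + 2) ≤ t := by
        apply div_le_self htpos.le
        have : (0:ℝ) ≤ n := Nat.cast_nonneg n
        linarith
      have h2 : 0 < t / (n + 2) := by positivity
      exact ⟨by linarith, by linarith [htm.2]⟩
    refine ⟨fun n => mkLR (fst M) (fst_lt M) (t - t / (n + 2)) (hmem n), ?_, ?_⟩
    · intro n
      rw [lt_iff']
      refine Or.inr ⟨rfl, ?_⟩
      simp only [snd_mk, ← ht]
      have : (0:ℝ) < t / (n + 2) := by positivity
      linarith
    · intro y hy
      rcases (lt_iff' y M).1 hy with h1 | ⟨h1, h2⟩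
      · exact ⟨0, by rw [le_iff']; exact Or.inl (by simpa using h1)⟩
      · obtain ⟨n, hn⟩ := one_div_seq (t - snd y) (by linarith)
        refine ⟨n, ?_⟩
        rw [le_iff']
        refine Or.inr ⟨by simpa using h1, ?_⟩
        simp only [snd_mk]
        have hd : t / (n + 2) ≤ 1 / (n + 2) := by
          gcongr
          linarith [htm.2]
        linarith
  · -- t = 0
    have hα : fst M ≠ 0 := by
      intro h0
      apply hM
      apply ext' (x := M) (y := 0) (by simpa using h0) (by simpa using ht0.symm)
    rcases Ordinal.zero_or_succ_or_isSuccLimit (fst M) with h0 | ⟨β, hβ⟩ | hlim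
    · exact absurd h0 hα
    · -- successor case
      have hβlt : β < fst M := hβ ▸ Order.lt_succ β
      have hβω : β < omega1 := hβlt.trans (fst_lt M)
      have hmem : ∀ n : ℕ, 1 - 1 / ((n:ℝ) + 2) ∈ Set.Ico (0:ℝ) 1 := by
        intro n
        have h1 : 1 / ((n:ℝ) + 2) ≤ 1 := by
          apply div_le_one_of_le₀
          · have : (0:ℝ) ≤ n := Nat.cast_nonneg n
            linarith
          · positivity
        have h2 : 0 < 1 / ((n:ℝ) + 2) := by positivity
        exact ⟨by linarith, by linarith⟩
      refine ⟨fun n => mkLR β hβω (1 - 1 / (n + 2)) (hmem n), ?_, ?_⟩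
      · intro n
        rw [lt_iff']
        exact Or.inl (by simpa using hβlt)
      · intro y hy
        rcases (lt_iff' y M).1 hy with h1 | ⟨h1, h2⟩
        · have : fst y ≤ β := by
            rw [← hβ] at h1
            exact Order.lt_succ_iff.1 h1
          rcases lt_or_eq_of_le this with hc | hc
          · exact ⟨0, by rw [le_iff']; exact Or.inl (by simpa using hc)⟩
          · obtain ⟨n, hn⟩ := one_div_seq (1 - snd y) (by linarith [(snd_mem y).2])
            refine ⟨n, ?_⟩
            rw [le_iff']
            refine Or.inr ⟨by simpa using hc, ?_⟩
            simp only [snd_mk]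
            linarith
        · exact absurd h2 (by rw [← ht0]; exact not_lt.2 (snd_mem y).1)
    · -- limit case
      have hcard : (Set.Iio (fst M)).Countable := by
        rw [Cardinal.countable_iff_lt_aleph_one]
        rw [Ordinal.mk_Iio_ordinal]
        have h1 : (fst M).card < Cardinal.aleph 1 := by
          apply Cardinal.lt_ord.1
          rw [Cardinal.ord_aleph]
          exact fst_lt M
        calc Cardinal.lift.{1} (fst M).card
            < Cardinal.lift.{1} (Cardinal.aleph 1) := Cardinal.lift_lt.2 h1
          _ = Cardinal.aleph 1 := by
              rw [Cardinal.lift_aleph, Ordinal.lift_one]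
      have hne : Nonempty (Set.Iio (fst M)) :=
        ⟨⟨0, pos_iff_ne_zero.2 hα⟩⟩
      have : Countable (Set.Iio (fst M)) := hcard.to_subtype
      obtain ⟨e, he⟩ := exists_surjective_nat (Set.Iio (fst M))
      have hesucc : ∀ n, ((e n : Ordinal) + 1) < fst M := by
        intro n
        rw [Ordinal.add_one_eq_succ]
        exact hlim.succ_lt (e n).2
      refine ⟨fun n => mkLR ((e n : Ordinal) + 1) ((hesucc n).trans (fst_lt M)) 0
        (by norm_num), ?_, ?_⟩
      · intro n
        rw [lt_iff']
        exact Or.inl (by simpa using hesucc n)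
      · intro y hy
        rcases (lt_iff' y M).1 hy with h1 | ⟨h1, h2⟩
        · obtain ⟨n, hn⟩ := he ⟨fst y, h1⟩
          refine ⟨n, ?_⟩
          rw [le_iff']
          refine Or.inl ?_
          simp only [fst_mk]
          rw [hn]
          exact lt_add_one _
        · exact absurd h2 (by rw [← ht0]; exact not_lt.2 (snd_mem y).1)



/-- Two closed unbounded subsets of the long ray intersect. -/
lemma clubs_meet (A B : Set LongRay) (hA : IsClosed A) (hB : IsClosed B)
    (hAu : ∀ z, ∃ x, z ≤ x ∧ x ∈ A) (hBu : ∀ z, ∃ x, z ≤ x ∧ x ∈ B) :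
    (A ∩ B).Nonempty := by
  have hA' : ∀ z : LongRay, ∃ x, z < x ∧ x ∈ A := by
    intro z
    obtain ⟨z', hz'⟩ := exists_gt z
    obtain ⟨x, hx1, hx2⟩ := hAu z'
    exact ⟨x, hz'.trans_le hx1, hx2⟩
  have hB' : ∀ z : LongRay, ∃ x, z < x ∧ x ∈ B := by
    intro z
    obtain ⟨z', hz'⟩ := exists_gt z
    obtain ⟨x, hx1, hx2⟩ := hBu z'
    exact ⟨x, hz'.trans_le hx1, hx2⟩
  choose nA hnA1 hnA2 using hA'
  choose nB hnB1 hnB2 using hB'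
  let c : ℕ → LongRay := fun n =>
    Nat.rec (nA 0) (fun m x => if m % 2 = 0 then nB x else nA x) n
  have hcs : ∀ n, c (n+1) = if n % 2 = 0 then nB (c n) else nA (c n) := fun n => rfl
  have hstep : ∀ n, c n < c (n+1) := by
    intro n
    rw [hcs n]
    by_cases h : n % 2 = 0
    · rw [if_pos h]; exact hnB1 (c n)
    · rw [if_neg h]; exact hnA1 (c n)
  have hmono : StrictMono c := strictMono_nat_of_lt_succ hstep
  have hceven : ∀ k, c (2*k) ∈ A := by
    intro k
    cases k with
    | zero => exact hnA2 0
    | succ k =>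
      have : 2*(k+1) = (2*k+1)+1 := by ring
      rw [this, hcs (2*k+1), if_neg (by omega)]
      exact hnA2 _
  have hcodd : ∀ k, c (2*k+1) ∈ B := by
    intro k
    rw [hcs (2*k), if_pos (by omega)]
    exact hnB2 _
  obtain ⟨b, hbb⟩ := countable_bdd c
  obtain ⟨x, hx⟩ := exists_isLUB (S := Set.range c) ⟨c 0, mem_range_self 0⟩
    ⟨b, by rintro _ ⟨n, rfl⟩; exact hbb n⟩
  have hevenLUB : IsLUB (Set.range fun k => c (2*k)) x := by
    constructor
    · rintro _ ⟨k, rfl⟩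
      exact hx.1 ⟨2*k, rfl⟩
    · intro w hw
      apply hx.2
      rintro _ ⟨n, rfl⟩
      calc c n ≤ c (2*n) := hmono.monotone (show n ≤ 2*n by omega)
        _ ≤ w := hw ⟨n, rfl⟩
  have hoddLUB : IsLUB (Set.range fun k => c (2*k+1)) x := by
    constructor
    · rintro _ ⟨k, rfl⟩
      exact hx.1 ⟨2*k+1, rfl⟩
    · intro w hw
      apply hx.2
      rintro _ ⟨n, rfl⟩
      calc c n ≤ c (2*n+1) := hmono.monotone (show n ≤ 2*n+1 by omega)
        _ ≤ w := hw ⟨n, rfl⟩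
  refine ⟨x, ?_, ?_⟩
  · have h1 : x ∈ closure (Set.range fun k => c (2*k)) :=
      hevenLUB.mem_closure ⟨c 0, 0, rfl⟩
    have h2 : closure (Set.range fun k => c (2*k)) ⊆ A := by
      rw [← hA.closure_eq]
      exact closure_mono (by rintro _ ⟨k, rfl⟩; exact hceven k)
    exact h2 h1
  · have h1 : x ∈ closure (Set.range fun k => c (2*k+1)) :=
      hoddLUB.mem_closure ⟨c 1, 0, rfl⟩
    have h2 : closure (Set.range fun k => c (2*k+1)) ⊆ B := by
      rw [← hB.closure_eq]
      exact closure_mono (by rintro _ ⟨k, rfl⟩; exact hcodd k)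
    exact h2 h1

end LR

open LR

/-- Every continuous bounded map `R → R` is eventually constant. -/
theorem eventually_constant_of_bddMap (f : LongRay → LongRay)
    (hf : Continuous f) (hb : BddMap f) :
    ∃ z : LongRay, ∀ x, z ≤ x → f x = f z := by
  obtain ⟨b, hb⟩ := hb
  -- upper envelope of tails
  have hsEx : ∀ z : LongRay, ∃ y, IsLUB (f '' Set.Ici z) y := fun z =>
    exists_isLUB ⟨f z, Set.mem_image_of_mem f Set.self_mem_Ici⟩
      ⟨b, by rintro _ ⟨x, _, rfl⟩; exact hb x⟩
  choose s hs using hsEx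
  -- lower envelope of tails
  have hiEx : ∀ z : LongRay, ∃ y, IsGLB (f '' Set.Ici z) y := fun z =>
    exists_isGLB ⟨f z, Set.mem_image_of_mem f Set.self_mem_Ici⟩
  choose i hi using hiEx
  have hsmono : ∀ {z z' : LongRay}, z ≤ z' → s z' ≤ s z := fun {z z'} h =>
    (hs z').2 fun y hy => (hs z).1 (Set.image_mono (Set.Ici_subset_Ici.2 h) hy)
  have himono : ∀ {z z' : LongRay}, z ≤ z' → i z ≤ i z' := fun {z z'} h =>
    (hi z').2 fun y hy => (hi z).1 (Set.image_mono (Set.Ici_subset_Ici.2 h) hy)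
  -- the eventual value of the upper envelope
  obtain ⟨I₀, hI₀⟩ := exists_isGLB (S := Set.range s) ⟨s 0, mem_range_self 0⟩
  obtain ⟨Ls, hLs1, hLs2⟩ := coinitial_above I₀
  have hzn : ∀ n, ∃ z, s z < Ls n := by
    intro n
    by_contra h
    push_neg at h
    exact absurd (hI₀.2 (by rintro _ ⟨z, rfl⟩; exact h z)) (not_le.2 (hLs1 n))
  choose zs hzs using hzn
  obtain ⟨z₀, hz₀⟩ := countable_bdd zs
  have hsz : ∀ x, z₀ ≤ x → s x = I₀ := by
    intro x hx
    rcases lt_or_eq_of_le (hI₀.1 (mem_range_self x)) with h | h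
    · obtain ⟨n, hn⟩ := hLs2 (s x) h
      have h2 : s x ≤ s (zs n) := hsmono ((hz₀ n).trans hx)
      exact absurd (hn.trans_lt (h2.trans_lt (hzs n))) (lt_irrefl _)
    · exact h.symm
  -- the eventual value of the lower envelope
  obtain ⟨I₁, hI₁⟩ := exists_isLUB (S := Set.range i) ⟨i 0, mem_range_self 0⟩
    ⟨b, by
      rintro _ ⟨z, rfl⟩
      exact ((hi z).1 (Set.mem_image_of_mem f Set.self_mem_Ici)).trans (hb z)⟩
  have hiattain : ∃ z₁, ∀ x, z₁ ≤ x → i x = I₁ := by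
    by_cases hI₁0 : I₁ = 0
    · refine ⟨0, fun x _ => le_antisymm ?_ ?_⟩
      · exact hI₁.1 (mem_range_self x)
      · rw [hI₁0]; exact zero_le' _
    · obtain ⟨Ms, hMs1, hMs2⟩ := cofinal_below I₁ hI₁0
      have hzn' : ∀ n, ∃ z, Ms n < i z := by
        intro n
        by_contra h
        push_neg at h
        exact absurd (hI₁.2 (by rintro _ ⟨z, rfl⟩; exact h z)) (not_le.2 (hMs1 n))
      choose zi hzi using hzn'
      obtain ⟨z₁, hz₁⟩ := countable_bdd zi
      refine ⟨z₁, fun x hx => ?_⟩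
      rcases lt_or_eq_of_le (hI₁.1 (mem_range_self x)) with h | h
      · obtain ⟨n, hn⟩ := hMs2 (i x) h
        have h2 : i (zi n) ≤ i x := himono ((hz₁ n).trans hx)
        exact absurd (hn.trans_lt ((hzi n).trans_le h2)) (lt_irrefl _)
      · exact h
  obtain ⟨z₁, hz₁⟩ := hiattain
  set z₂ := max z₀ z₁ with hz₂
  have hfle : ∀ x, z₂ ≤ x → f x ≤ I₀ := by
    intro x hx
    have h := (hs z₂).1 (Set.mem_image_of_mem f hx)
    rwa [hsz z₂ (le_max_left _ _)] at h
  have hfge : ∀ x, z₂ ≤ x → I₁ ≤ f x := by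
    intro x hx
    have h := (hi z₂).1 (Set.mem_image_of_mem f hx)
    rwa [hz₁ z₂ (le_max_right _ _)] at h
  rcases eq_or_lt_of_le ((hfge z₂ le_rfl).trans (hfle z₂ le_rfl)) with heq | hlt
  · -- the two envelopes agree: f is eventually constant
    refine ⟨z₂, fun x hx => ?_⟩
    have h1 : f x = I₀ := le_antisymm (hfle x hx) (heq ▸ hfge x hx)
    have h2 : f z₂ = I₀ := le_antisymm (hfle z₂ le_rfl) (heq ▸ hfge z₂ le_rfl)
    rw [h1, h2]
  · -- otherwise we produce two disjoint closed unbounded sets, contradiction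
    exfalso
    obtain ⟨c, hc1, hc2⟩ := dense' hlt
    obtain ⟨d, hd1, hd2⟩ := dense' hc2
    have hAclub : ∀ z, ∃ x, z ≤ x ∧ x ∈ f ⁻¹' Set.Iic c := by
      intro z
      set w := max z z₂ with hw
      have hnl : c ∉ lowerBounds (f '' Set.Ici w) := by
        intro hcl
        have := (hi w).2 hcl
        rw [hz₁ w ((le_max_right z₀ z₁).trans (le_max_right z z₂))] at this
        exact absurd this (not_le.2 hc1)
      simp only [lowerBounds, Set.mem_setOf_eq] at hnl
      push_neg at hnl
      obtain ⟨y, ⟨x, hx1, rfl⟩, hy2⟩ := hnl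
      exact ⟨x, (le_max_left z z₂).trans hx1, hy2.le⟩
    have hBclub : ∀ z, ∃ x, z ≤ x ∧ x ∈ f ⁻¹' Set.Ici d := by
      intro z
      set w := max z z₂ with hw
      have hnu : d ∉ upperBounds (f '' Set.Ici w) := by
        intro hdu
        have := (hs w).2 hdu
        rw [hsz w ((le_max_left z₀ z₁).trans (le_max_right z z₂))] at this
        exact absurd this (not_le.2 hd2)
      simp only [upperBounds, Set.mem_setOf_eq] at hnu
      push_neg at hnu
      obtain ⟨y, ⟨x, hx1, rfl⟩, hy2⟩ := hnu
      exact ⟨x, (le_max_left z z₂).trans hx1, hy2.le⟩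
    obtain ⟨x, hxA, hxB⟩ := clubs_meet (f ⁻¹' Set.Iic c) (f ⁻¹' Set.Ici d)
      (IsClosed.preimage hf isClosed_Iic) (IsClosed.preimage hf isClosed_Ici)
      hAclub hBclub
    exact absurd ((hxB.trans hxA : d ≤ c)) (not_le.2 hd1)
end
end

section
/- More generally, for any n ≥ 1, if f : R → Rⁿ is a continuous embedding of the long ray into its n-th power, then at least one coordinate projection πᵢ ∘ f is cofinal in R. -/
open Set Topology
noncomputable section

/-! ### Auxiliary material -/

abbrev SS : Type 1 := {o : Ordinal // o < omega1}

def izero : Set.Ico (0:ℝ) 1 := ⟨0, by constructor <;> norm_num⟩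

/-- The canonical copy of `ω₁` inside the long ray. -/
def pp (a : SS) : LongRay := toLex (a, izero)

lemma lr_lt_iff (a b : {o : Ordinal // o < omega1} × (Set.Ico (0:ℝ) 1)) :
    (toLex a : LongRay) < toLex b ↔ a.1 < b.1 ∨ a.1 = b.1 ∧ a.2 < b.2 :=
  Prod.Lex.lt_iff

lemma lr_le_iff (a b : {o : Ordinal // o < omega1} × (Set.Ico (0:ℝ) 1)) :
    (toLex a : LongRay) ≤ toLex b ↔ a.1 < b.1 ∨ a.1 = b.1 ∧ a.2 ≤ b.2 :=
  Prod.Lex.le_iff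

lemma pp_lt_pp {a b : SS} (h : a < b) : pp a < pp b :=
  (lr_lt_iff _ _).2 (Or.inl h)

lemma pp_injective : Function.Injective pp := by
  intro a b hab
  have := congrArg (fun z : LongRay => (ofLex z).1) hab
  exact this

lemma lt_pp_first {x : LongRay} {b : SS} (h : x < pp b) : (ofLex x).1 < b := by
  rcases (lr_lt_iff (ofLex x) (b, izero)).1 h with h1 | ⟨h1, h2⟩
  · exact h1
  · exact absurd h2 (not_lt.2 (ofLex x).2.2.1)

lemma omega1_eq : omega1 = (Cardinal.aleph 1).ord := (Cardinal.ord_aleph 1).symm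

lemma sup_lt_omega1 {ι : Type} [Countable ι] (f : ι → Ordinal)
    (hf : ∀ i, f i < omega1) : iSup f < omega1 := by
  have h2 : ∀ i, f i < (Cardinal.aleph 1).ord := by
    intro i; rw [← omega1_eq]; exact hf i
  exact Ordinal.iSup_lt_omega_one hf

lemma tendsto_pp {a : ℕ → SS} {γ : SS} (hlt : ∀ n, a n < γ)
    (hcof : ∀ δ : SS, δ < γ → ∃ n, ∀ m, n ≤ m → δ < a m) :
    Filter.Tendsto (fun n => pp (a n)) Filter.atTop (nhds (pp γ)) := by
  rw [tendsto_order]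
  constructor
  · intro x hx
    obtain ⟨n, hn⟩ := hcof _ (lt_pp_first hx)
    refine Filter.eventually_atTop.2 ⟨n, fun m hm => ?_⟩
    have : (ofLex x).1 < a m := hn m hm
    exact (lr_lt_iff (ofLex x) (a m, izero)).2 (Or.inl this)
  · intro x hx
    exact Filter.Eventually.of_forall fun n => lt_trans (pp_lt_pp (hlt n)) hx

lemma not_both_unbounded {h : LongRay → LongRay} (hc : Continuous h) {q r : LongRay}
    (hqr : q < r)
    (hA : ∀ γ : SS, ∃ α, γ < α ∧ h (pp α) ≤ q)
    (hB : ∀ γ : SS, ∃ α, γ < α ∧ r ≤ h (pp α)) : False := by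
  classical
  let FA : SS → SS := fun γ => Classical.choose (hA γ)
  have hFA : ∀ γ, γ < FA γ ∧ h (pp (FA γ)) ≤ q := fun γ => Classical.choose_spec (hA γ)
  let FB : SS → SS := fun γ => Classical.choose (hB γ)
  have hFB : ∀ γ, γ < FB γ ∧ r ≤ h (pp (FB γ)) := fun γ => Classical.choose_spec (hB γ)
  let a : ℕ → SS := fun n => Nat.rec (FA ⟨0, Ordinal.omega_pos 1⟩) (fun _ x => FA (FB x)) n
  let b : ℕ → SS := fun n => FB (a n)
  have hab : ∀ n, a n < b n := fun n => (hFB (a n)).1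
  have hba : ∀ n, b n < a (n + 1) := fun n => (hFA (b n)).1
  have hmono : StrictMono a := strictMono_nat_of_lt_succ fun n => lt_trans (hab n) (hba n)
  have hγ0 : iSup (fun n => (a n).val) < omega1 :=
    sup_lt_omega1 _ (fun n => (a n).2)
  set γ : SS := ⟨iSup (fun n => (a n).val), hγ0⟩ with hγdef
  have hle : ∀ n, a n ≤ γ := fun n => Ordinal.le_iSup (fun n => (a n).val) n
  have hlta : ∀ n, a n < γ := fun n => lt_of_lt_of_le (hmono (Nat.lt_succ_self n)) (hle (n+1))
  have hltb : ∀ n, b n < γ := fun n => lt_of_lt_of_le (hba n) (hle (n+1))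
  have hcofa : ∀ δ : SS, δ < γ → ∃ n, ∀ m, n ≤ m → δ < a m := by
    intro δ hδ
    obtain ⟨n, hn⟩ := Ordinal.lt_iSup_iff.1 (show δ.val < _ from hδ)
    exact ⟨n, fun m hm => lt_of_lt_of_le hn (hmono.monotone hm)⟩
  have hcofb : ∀ δ : SS, δ < γ → ∃ n, ∀ m, n ≤ m → δ < b m := by
    intro δ hδ
    obtain ⟨n, hn⟩ := hcofa δ hδ
    exact ⟨n, fun m hm => lt_trans (hn m hm) (hab m)⟩
  have hta := tendsto_pp hlta hcofa
  have htb := tendsto_pp hltb hcofb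
  have h1 : h (pp γ) ≤ q := by
    have hcl : IsClosed {x : LongRay | h x ≤ q} := isClosed_le hc continuous_const
    have haq : ∀ n, h (pp (a n)) ≤ q := by
      intro n; cases n with
      | zero => exact (hFA _).2
      | succ k => exact (hFA _).2
    exact hcl.mem_of_tendsto hta (Filter.Eventually.of_forall fun n => haq n)
  have h2 : r ≤ h (pp γ) := by
    have hcl : IsClosed {x : LongRay | r ≤ h x} := isClosed_le continuous_const hc
    exact hcl.mem_of_tendsto htb (Filter.Eventually.of_forall fun n =>
      show r ≤ h (pp (b n)) from (hFB _).2)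
  exact absurd (le_trans h2 h1) (not_le.2 hqr)

lemma exists_bound {h : LongRay → LongRay} (hc : Continuous h) {q r : LongRay} (hqr : q < r) :
    ∃ γ : SS, ∀ α β : SS, γ < α → γ < β → ¬(h (pp α) ≤ q ∧ r ≤ h (pp β)) := by
  by_contra hcon
  push_neg at hcon
  refine not_both_unbounded hc hqr (fun γ => ?_) (fun γ => ?_)
  · obtain ⟨α, β, h1, h2, h3, h4⟩ := hcon γ
    exact ⟨α, h1, h3⟩
  · obtain ⟨α, β, h1, h2, h3, h4⟩ := hcon γ
    exact ⟨β, h2, h4⟩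

lemma card_le_aleph0 (b : SS) : b.val.card ≤ Cardinal.aleph0 := by
  have h1 : b.val < (Cardinal.aleph 1).ord := by rw [← omega1_eq]; exact b.2
  have h2 : b.val.card < Cardinal.aleph 1 := Cardinal.lt_ord.1 h1
  rw [← Cardinal.succ_aleph0] at h2
  exact Order.lt_succ_iff.1 h2

lemma countable_Iic (b : SS) : Countable {δ : SS // δ ≤ b} := by
  have hcard : Cardinal.mk (Set.Iio (b.val + 1)) ≤ Cardinal.aleph0 := by
    rw [Ordinal.mk_Iio_ordinal]
    rw [Cardinal.lift_le_aleph0]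
    rw [Ordinal.card_add, Ordinal.card_one]
    exact Cardinal.add_le_aleph0.2 ⟨card_le_aleph0 b, Cardinal.one_le_aleph0⟩
  have hco : Countable (Set.Iio (b.val + 1)) := Cardinal.mk_le_aleph0_iff.1 hcard
  have hinj : Function.Injective
      (fun δ : {δ : SS // δ ≤ b} => (⟨δ.1.1, lt_of_le_of_lt
        (show δ.1.1 ≤ b.val from δ.2) (by
        rw [Ordinal.add_one_eq_succ]; exact Order.lt_succ _)⟩ : Set.Iio (b.val + 1))) := by
    intro x y hxy
    have : x.1.1 = y.1.1 := Subtype.mk_eq_mk.1 hxy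
    exact Subtype.ext (Subtype.ext this)
  exact hinj.countable

/-- Index type for a countable order-dense family below the bound `b`. -/
def DenseIdx (b : LongRay) : Type 1 :=
  {δ : SS // δ ≤ (ofLex b).1} × {q : ℚ // 0 ≤ (q:ℝ) ∧ (q:ℝ) < 1}

instance (b : LongRay) : Countable (DenseIdx b) := by
  have := countable_Iic (ofLex b).1
  exact instCountableProd

instance (b : LongRay) : Nonempty (DenseIdx b) :=
  ⟨⟨⟨⟨0, Ordinal.omega_pos 1⟩, Subtype.coe_le_coe.1 (zero_le)⟩,
    ⟨0, by norm_num⟩⟩⟩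

/-- The countable order-dense family below `b`. -/
def ee (b : LongRay) (z : DenseIdx b) : LongRay :=
  toLex (z.1.1, ⟨(z.2.1 : ℝ), z.2.2⟩)

lemma dense_lemma (b : LongRay) (x y : LongRay) (hxy : x < y) (hyb : y ≤ b) :
    ∃ z : DenseIdx b, x < ee b z ∧ ee b z < y := by
  have hy1 : (ofLex y).1 ≤ (ofLex b).1 := by
    rcases (lr_le_iff (ofLex y) (ofLex b)).1 hyb with h | ⟨h, _⟩
    · exact le_of_lt h
    · exact le_of_eq h
  rcases (lr_lt_iff (ofLex x) (ofLex y)).1 hxy with h1 | ⟨h1, h2⟩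
  · -- first coordinates differ
    obtain ⟨q, hq1, hq2⟩ := exists_rat_btwn (show ((ofLex x).2 : ℝ) < 1 from (ofLex x).2.2.2)
    refine ⟨⟨⟨(ofLex x).1, le_of_lt (lt_of_lt_of_le h1 hy1)⟩,
      ⟨q, le_trans (ofLex x).2.2.1 hq1.le, hq2⟩⟩, ?_, ?_⟩
    · exact (lr_lt_iff _ _).2 (Or.inr ⟨rfl, hq1⟩)
    · exact (lr_lt_iff _ _).2 (Or.inl h1)
  · -- same first coordinate
    obtain ⟨q, hq1, hq2⟩ := exists_rat_btwn (show ((ofLex x).2 : ℝ) < (ofLex y).2 from h2)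
    refine ⟨⟨⟨(ofLex x).1, h1 ▸ hy1⟩,
      ⟨q, le_trans (ofLex x).2.2.1 hq1.le, lt_trans hq2 (ofLex y).2.2.2⟩⟩, ?_, ?_⟩
    · exact (lr_lt_iff _ _).2 (Or.inr ⟨rfl, hq1⟩)
    · exact (lr_lt_iff _ _).2 (Or.inr ⟨h1, hq2⟩)

lemma eventually_const {h : LongRay → LongRay} (hc : Continuous h) {b : LongRay}
    (hb : ∀ x, h x < b) :
    ∃ γ : SS, ∀ α β : SS, γ < α → γ < β → h (pp α) = h (pp β) := by
  classical
  obtain ⟨F, hF⟩ := exists_surjective_nat (DenseIdx b × DenseIdx b)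
  let g : DenseIdx b × DenseIdx b → Ordinal := fun z =>
    if hlt : ee b z.1 < ee b z.2 then (Classical.choose (exists_bound hc hlt)).val else 0
  have hglt : ∀ z, g z < omega1 := by
    intro z
    by_cases hlt : ee b z.1 < ee b z.2
    · simp only [g, dif_pos hlt]
      exact (Classical.choose (exists_bound hc hlt)).2
    · simp only [g, dif_neg hlt]
      exact Ordinal.omega_pos 1
  have hsup : iSup (g ∘ F) < omega1 := sup_lt_omega1 _ (fun n => hglt (F n))
  set γ : SS := ⟨iSup (g ∘ F), hsup⟩ with hγdef
  have key : ∀ α β : SS, γ < α → γ < β → ¬ (h (pp α) < h (pp β)) := by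
    intro α β hα hβ hlt
    obtain ⟨z1, hz1a, hz1b⟩ := dense_lemma b _ _ hlt (hb (pp β)).le
    obtain ⟨z2, hz2a, hz2b⟩ := dense_lemma b _ _ hz1b (hb (pp β)).le
    have hee : ee b z1 < ee b z2 := hz2a
    have hspec := Classical.choose_spec (exists_bound hc hee)
    have hgz : g (z1, z2) = (Classical.choose (exists_bound hc hee)).val := dif_pos hee
    obtain ⟨k, hk⟩ := hF (z1, z2)
    have hle : g (z1, z2) ≤ γ.val := by
      rw [← hk]
      exact Ordinal.le_iSup (g ∘ F) k
    have hgle : (Classical.choose (exists_bound hc hee)).val ≤ γ.val := hgz ▸ hle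
    have h1 : Classical.choose (exists_bound hc hee) < α := lt_of_le_of_lt hgle hα
    have h2 : Classical.choose (exists_bound hc hee) < β := lt_of_le_of_lt hgle hβ
    exact hspec α β h1 h2 ⟨hz1a.le, hz2b.le⟩
  refine ⟨γ, fun α β hα hβ => ?_⟩
  rcases lt_trichotomy (h (pp α)) (h (pp β)) with hl | he | hg
  · exact absurd hl (key α β hα hβ)
  · exact he
  · exact absurd hg (key β α hβ hα)

/-- For any `n ≥ 1`, a continuous embedding `R → Rⁿ` has at least one cofinal
coordinate projection. -/
theorem embedding_pow_has_cofinal_coord (n : ℕ) (hn : 1 ≤ n)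
    (f : LongRay → Fin n → LongRay) (hf : Topology.IsEmbedding f) :
    ∃ i : Fin n, Cofinal (fun x => f x i) := by
  by_contra hcon
  push_neg at hcon
  have hbd : ∀ i, ∃ b, ∀ x, f x i < b := by
    intro i
    have hi := hcon i
    rw [Cofinal] at hi
    push_neg at hi
    obtain ⟨b, hb⟩ := hi
    exact ⟨b, fun x => hb x⟩
  choose b hb using hbd
  have hgam : ∀ i, ∃ γ : SS, ∀ α β : SS, γ < α → γ < β → f (pp α) i = f (pp β) i := by
    intro i
    exact eventually_const ((continuous_apply i).comp hf.continuous) (hb i)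
  choose γ hγ using hgam
  have hsup : iSup (fun i => (γ i).val) < omega1 := sup_lt_omega1 _ (fun i => (γ i).2)
  set γ0 : Ordinal := iSup (fun i => (γ i).val) with hγ0def
  have hlim : Order.IsSuccLimit omega1 := Cardinal.isSuccLimit_omega 1
  have h1 : γ0 + 1 < omega1 := by
    rw [Ordinal.add_one_eq_succ]; exact hlim.succ_lt hsup
  have h2 : γ0 + 1 + 1 < omega1 := by
    rw [Ordinal.add_one_eq_succ]; exact hlim.succ_lt h1
  set A : SS := ⟨γ0 + 1, h1⟩
  set B : SS := ⟨γ0 + 1 + 1, h2⟩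
  have hγA : ∀ i, γ i < A := by
    intro i
    have : (γ i).val ≤ γ0 := Ordinal.le_iSup (fun i => (γ i).val) i
    have h01 : γ0 < γ0 + 1 := by
      rw [Ordinal.add_one_eq_succ]; exact Order.lt_succ _
    exact Subtype.coe_lt_coe.1 (lt_of_le_of_lt this h01)
  have hγB : ∀ i, γ i < B := by
    intro i
    have h01 : (γ0 : Ordinal) + 1 < γ0 + 1 + 1 := by
      rw [Ordinal.add_one_eq_succ (γ0 + 1)]; exact Order.lt_succ _
    exact lt_trans (hγA i) (Subtype.coe_lt_coe.1 h01)
  have heq : f (pp A) = f (pp B) := funext fun i => hγ i A B (hγA i) (hγB i)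
  have hAB : pp A = pp B := hf.injective heq
  have : A = B := pp_injective hAB
  have hane : (γ0 : Ordinal) + 1 ≠ γ0 + 1 + 1 := by
    have : (γ0 : Ordinal) + 1 < γ0 + 1 + 1 := by
      rw [Ordinal.add_one_eq_succ (γ0 + 1)]; exact Order.lt_succ _
    exact ne_of_lt this
  exact hane (congrArg Subtype.val this)
end
end

section
/- If f : L → L² is continuous and the set { x ∈ L₊ : f(x) = (x,x) } is cofinal in L₊ and the set { y ∈ L₋ : f(y) = (−y,−y) } is cofinal in L₋ (where −y denotes the point of L₊ corresponding to y ∈ L₋), then f is not injective. -/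
open Set Topology
noncomputable section

/-- The long line `L`: two copies `L₋, L₊` of the closed long ray glued at `0`,
with the order reversed on `L₋` (modelled as the lexicographic sum of the strictly
negative part, with dual order, followed by the nonnegative ray). -/
def LongLine : Type 1 := ({x : LongRay // 0 < x}ᵒᵈ) ⊕ₗ LongRay

instance : LinearOrder LongLine :=
  inferInstanceAs (LinearOrder (({x : LongRay // 0 < x}ᵒᵈ) ⊕ₗ LongRay))

instance : TopologicalSpace LongLine := Preorder.topology LongLine
instance : OrderTopology LongLine := ⟨rfl⟩

/-- The canonical inclusion of the long ray onto `L₊ ⊆ L`. -/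
def LongLine.pos (x : LongRay) : LongLine := toLex (Sum.inr x)

/-- The canonical inclusion of the long ray onto `L₋ ⊆ L` (order reversed). -/
def LongLine.neg (x : LongRay) : LongLine :=
  if h : 0 < x then toLex (Sum.inl (OrderDual.toDual ⟨x, h⟩)) else toLex (Sum.inr 0)

/-- The reflection `y ↦ -y` of the long line exchanging `L₋` and `L₊`. -/
def LongLine.negate (z : LongLine) : LongLine :=
  match ofLex z with
  | Sum.inl x => LongLine.pos (OrderDual.ofDual x).1
  | Sum.inr x => LongLine.neg x

/-- The gluing point `0` of the long line. -/
def LongLine.zero : LongLine := LongLine.pos 0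

-- Auxiliary definitions and lemmas
def rord (r : LongRay) : Ordinal := ((ofLex r).1 : {o : Ordinal // o < omega1}).1

lemma rord_lt_omega1 (r : LongRay) : rord r < omega1 := ((ofLex r).1).2

lemma omega1_isLimit : Order.IsSuccLimit omega1 := by
  have := Cardinal.isSuccLimit_ord (Cardinal.aleph0_le_aleph 1)
  rwa [Cardinal.ord_aleph] at this

lemma lt_of_rord_lt {r s : LongRay} (h : rord r < rord s) : r < s := by
  have : toLex (ofLex r) < toLex (ofLex s) :=
    (Prod.Lex.lt_iff (x := toLex (ofLex r)) (y := toLex (ofLex s))).mpr (Or.inl (Subtype.mk_lt_mk.mpr h))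
  exact this

lemma rord_mono {r s : LongRay} (h : r ≤ s) : rord r ≤ rord s := by
  rcases (Prod.Lex.le_iff (x := toLex (ofLex r)) (y := toLex (ofLex s))).mp h with h1 | ⟨h1, _⟩
  · exact le_of_lt h1
  · exact le_of_eq (congrArg Subtype.val h1)

lemma zero_le_ray (r : LongRay) : (0 : LongRay) ≤ r := by
  have : toLex (ofLex (0:LongRay)) ≤ toLex (ofLex r) := by
    apply (Prod.Lex.le_iff (x := toLex (ofLex (0:LongRay))) (y := toLex (ofLex r))).mpr
    rcases lt_or_eq_of_le (Subtype.mk_le_mk.mpr (zero_le (a := _)) :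
        (ofLex (0:LongRay)).1 ≤ (ofLex r).1) with h | h
    · exact Or.inl h
    · exact Or.inr ⟨h, Subtype.mk_le_mk.mpr (ofLex r).2.2.1⟩
  exact this

def succRay (r : LongRay) : LongRay :=
  toLex (⟨Order.succ (rord r), omega1_isLimit.succ_lt (rord_lt_omega1 r)⟩,
    ⟨0, by constructor <;> norm_num⟩)

lemma rord_succRay (r : LongRay) : rord (succRay r) = Order.succ (rord r) := rfl

lemma succRay_pos (r : LongRay) : 0 < succRay r := by
  apply lt_of_rord_lt
  show (0:Ordinal) < Order.succ (rord r)
  exact Order.bot_lt_succ _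

lemma isLUB_ray (s : ℕ → LongRay) (o : Ordinal) (ho : o < omega1)
    (h1 : ∀ n, rord (s n) < o) (h2 : ∀ p, p < o → ∃ n, p < rord (s n)) :
    IsLUB (range s) (toLex (⟨o, ho⟩, ⟨0, by constructor <;> norm_num⟩)) := by
  constructor
  · rintro _ ⟨n, rfl⟩
    refine le_of_lt (lt_of_rord_lt ?_)
    exact h1 n
  · intro u hu
    by_contra hcon
    have hua : u < toLex (⟨o, ho⟩, ⟨0, by constructor <;> norm_num⟩) := not_le.mp hcon
    rcases (Prod.Lex.lt_iff (x := toLex (ofLex u)) (y := toLex (⟨o, ho⟩, ⟨0, by constructor <;> norm_num⟩))).mp hua with hlt | ⟨_, hsnd⟩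
    · obtain ⟨n, hn⟩ := h2 (rord u) hlt
      exact absurd (hu ⟨n, rfl⟩) (not_le.mpr (lt_of_rord_lt hn))
    · exact absurd (Subtype.coe_lt_coe.mpr hsnd) (not_lt.mpr (ofLex u).2.2.1)


def mnegPt (w : LongRay) (hw : 0 < w) : LongLine :=
  toLex (Sum.inl (OrderDual.toDual (⟨w, hw⟩ : {x : LongRay // 0 < x})))

lemma pos_le_pos_iff {x y : LongRay} : LongLine.pos x ≤ LongLine.pos y ↔ x ≤ y :=
  Sum.Lex.inr_le_inr_iff

lemma mneg_le_mneg_iff {x y : LongRay} {hx : 0 < x} {hy : 0 < y} :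
    mnegPt x hx ≤ mnegPt y hy ↔ y ≤ x := by
  rw [mnegPt, mnegPt]
  exact Sum.Lex.inl_le_inl_iff

lemma negate_mnegPt (w : LongRay) (hw : 0 < w) :
    LongLine.negate (mnegPt w hw) = LongLine.pos w := rfl

lemma isLUB_pos {s : ℕ → LongRay} {a : LongRay} (h : IsLUB (range s) a) :
    IsLUB (range (fun n => LongLine.pos (s n))) (LongLine.pos a) := by
  constructor
  · rintro _ ⟨n, rfl⟩
    exact pos_le_pos_iff.mpr (h.1 ⟨n, rfl⟩)
  · intro u hu
    have h0 : LongLine.pos (s 0) ≤ u := hu ⟨0, rfl⟩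
    rcases hc : ofLex u with d | v
    · have hu' : u = toLex (Sum.inl d) := by rw [← hc]; rfl
      rw [hu'] at h0
      exact absurd h0 Sum.Lex.not_inr_le_inl
    · have hu' : u = toLex (Sum.inr v) := by rw [← hc]; rfl
      rw [hu']
      refine pos_le_pos_iff.mpr (h.2 ?_)
      rintro _ ⟨n, rfl⟩
      have := hu ⟨n, rfl⟩
      rw [hu'] at this
      exact pos_le_pos_iff.mp this

lemma isGLB_mneg {w : ℕ → LongRay} {hw : ∀ n, 0 < w n} {a : LongRay} (ha : 0 < a)
    (h : IsLUB (range w) a) :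
    IsGLB (range (fun n => mnegPt (w n) (hw n))) (mnegPt a ha) := by
  constructor
  · rintro _ ⟨n, rfl⟩
    exact mneg_le_mneg_iff.mpr (h.1 ⟨n, rfl⟩)
  · intro u hu
    have h0 : u ≤ mnegPt (w 0) (hw 0) := hu ⟨0, rfl⟩
    rcases hc : ofLex u with d | v
    · have hu' : u = toLex (Sum.inl d) := by rw [← hc]; rfl
      have hd : (OrderDual.ofDual d).1 ∈ upperBounds (range w) := by
        rintro _ ⟨m, rfl⟩
        have := hu ⟨m, rfl⟩
        rw [hu'] at this
        have this2 : toLex (Sum.inl d) ≤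
            toLex (Sum.inl (OrderDual.toDual (⟨w m, hw m⟩ : {x : LongRay // 0 < x}))) := this
        have h2 : d ≤ OrderDual.toDual (⟨w m, hw m⟩ : {x : LongRay // 0 < x}) :=
          Sum.Lex.inl_le_inl_iff.mp this2
        exact h2
      have h3 : a ≤ (OrderDual.ofDual d).1 := h.2 hd
      rw [hu']
      have h4 : d ≤ OrderDual.toDual (⟨a, ha⟩ : {x : LongRay // 0 < x}) := h3
      exact Sum.Lex.inl_le_inl_iff.mpr h4
    · have hu' : u = toLex (Sum.inr v) := by rw [← hc]; rfl
      rw [hu'] at h0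
      exact absurd h0 Sum.Lex.not_inr_le_inl

/-- If `f : L → L²` is continuous, `{x ∈ L₊ : f x = (x,x)}` is cofinal in `L₊` and
`{y ∈ L₋ : f y = (-y,-y)}` is cofinal in `L₋`, then `f` is not injective. -/
theorem not_injective_of_cofinal_diagonals
    (f : LongLine → LongLine × LongLine) (hf : Continuous f)
    (hpos : ∀ b : LongLine, ∃ x, LongLine.zero ≤ x ∧ b ≤ x ∧ f x = (x, x))
    (hneg : ∀ b : LongLine, ∃ y, y ≤ LongLine.zero ∧ y ≤ b ∧
      f y = (LongLine.negate y, LongLine.negate y)) :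
    ¬ Function.Injective f := by
  intro hinj
  have stepX : ∀ c : LongRay, ∃ x : LongRay,
      Order.succ (rord c) ≤ rord x ∧ f (LongLine.pos x) = (LongLine.pos x, LongLine.pos x) := by
    intro c
    obtain ⟨z, hz0, hzb, hzf⟩ := hpos (LongLine.pos (succRay c))
    rcases hc : ofLex z with d | x
    · have hz' : z = toLex (Sum.inl d) := by rw [← hc]; rfl
      rw [hz'] at hz0
      exact absurd hz0 Sum.Lex.not_inr_le_inl
    · have hz' : z = toLex (Sum.inr x) := by rw [← hc]; rfl
      rw [hz'] at hzb hzf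
      refine ⟨x, ?_, hzf⟩
      have hle : succRay c ≤ x := pos_le_pos_iff.mp hzb
      simpa [rord_succRay] using rord_mono hle
  have stepY : ∀ c : LongRay, ∃ w : LongRay, ∃ hw : 0 < w,
      Order.succ (rord c) ≤ rord w ∧
      f (mnegPt w hw) = (LongLine.pos w, LongLine.pos w) := by
    intro c
    obtain ⟨y, hy0, hyb, hyf⟩ := hneg (LongLine.neg (succRay c))
    rw [show LongLine.neg (succRay c) = toLex (Sum.inl (OrderDual.toDual ⟨succRay c, succRay_pos c⟩)) from
      dif_pos (succRay_pos c)] at hyb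
    rcases hc : ofLex y with d | v
    · have hy' : y = toLex (Sum.inl d) := by rw [← hc]; rfl
      rw [hy'] at hyb hyf
      have h2d : d ≤ OrderDual.toDual (⟨succRay c, succRay_pos c⟩ : {x : LongRay // 0 < x}) :=
        Sum.Lex.inl_le_inl_iff.mp hyb
      have h2 : succRay c ≤ (OrderDual.ofDual d).1 := h2d
      refine ⟨(OrderDual.ofDual d).1, (OrderDual.ofDual d).2, by
        simpa [rord_succRay] using rord_mono h2, ?_⟩
      have hneg' : LongLine.negate (toLex (Sum.inl d))
          = LongLine.pos (OrderDual.ofDual d).1 := rfl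
      rw [hneg'] at hyf
      exact hyf
    · have hy' : y = toLex (Sum.inr v) := by rw [← hc]; rfl
      rw [hy'] at hyb
      exact absurd hyb Sum.Lex.not_inr_le_inl
  choose FX hFX1 hFX2 using stepX
  choose FW hFW0 hFW1 hFW2 using stepY
  let X : ℕ → LongRay := fun n => Nat.rec (FX 0) (fun _ xn => FX (FW xn)) n
  have hXs : ∀ n, X (n + 1) = FX (FW (X n)) := fun n => rfl
  let W : ℕ → LongRay := fun n => FW (X n)
  have hxw : ∀ n, rord (X n) < rord (W n) := fun n => Order.succ_le_iff.mp (hFW1 (X n))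
  have hwx : ∀ n, rord (W n) < rord (X (n + 1)) := fun n =>
    Order.succ_le_iff.mp (by rw [hXs]; exact hFX1 (FW (X n)))
  have hXlt : ∀ n, rord (X n) < rord (X (n + 1)) := fun n => (hxw n).trans (hwx n)
  have hbdd : BddAbove (range fun n => rord (X n)) :=
    ⟨omega1, by rintro _ ⟨n, rfl⟩; exact (rord_lt_omega1 _).le⟩
  have ho : (⨆ n, rord (X n)) < omega1 := by
    have h := Ordinal.iSup_lt_omega_one (f := fun n => rord (X n))
      (fun n => rord_lt_omega1 _)
    exact h
  set o := ⨆ n, rord (X n) with ho_def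
  have h1X : ∀ n, rord (X n) < o := fun n => lt_of_lt_of_le (hXlt n) (le_ciSup hbdd (n + 1))
  have h2X : ∀ p, p < o → ∃ n, p < rord (X n) := fun p hp => (lt_ciSup_iff hbdd).mp hp
  have h1W : ∀ n, rord (W n) < o := fun n => (hwx n).trans (h1X (n + 1))
  have h2W : ∀ p, p < o → ∃ n, p < rord (W n) := fun p hp => by
    obtain ⟨n, hn⟩ := h2X p hp; exact ⟨n, hn.trans (hxw n)⟩
  set a : LongRay := toLex (⟨o, ho⟩, ⟨0, by constructor <;> norm_num⟩) with ha_def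
  have hLUBX : IsLUB (range X) a := isLUB_ray X o ho h1X h2X
  have hLUBW : IsLUB (range W) a := isLUB_ray W o ho h1W h2W
  have ha0 : (0 : LongRay) < a := by
    apply lt_of_rord_lt
    show (0 : Ordinal) < o
    exact lt_of_le_of_lt (zero_le (a := _)) (h1X 0)
  have hXmono : Monotone X := (strictMono_nat_of_lt_succ fun n => lt_of_rord_lt (hXlt n)).monotone
  have hWmono : Monotone W :=
    (strictMono_nat_of_lt_succ fun n => lt_of_rord_lt ((hwx n).trans (hxw (n + 1)))).monotone
  have t1 : Filter.Tendsto (fun n => LongLine.pos (X n)) Filter.atTop (nhds (LongLine.pos a)) :=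
    tendsto_atTop_isLUB (fun m n h => pos_le_pos_iff.mpr (hXmono h)) (isLUB_pos hLUBX)
  have t2 : Filter.Tendsto (fun n => LongLine.pos (W n)) Filter.atTop (nhds (LongLine.pos a)) :=
    tendsto_atTop_isLUB (fun m n h => pos_le_pos_iff.mpr (hWmono h)) (isLUB_pos hLUBW)
  have t3 : Filter.Tendsto (fun n => mnegPt (W n) (hFW0 (X n))) Filter.atTop
      (nhds (mnegPt a ha0)) :=
    tendsto_atTop_isGLB (fun m n h => mneg_le_mneg_iff.mpr (hWmono h))
      (isGLB_mneg ha0 hLUBW)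
  have hXf : ∀ n, f (LongLine.pos (X n)) = (LongLine.pos (X n), LongLine.pos (X n)) := by
    intro n
    cases n with
    | zero => exact hFX2 0
    | succ m => exact hFX2 (FW (X m))
  have hYf : ∀ n, f (mnegPt (W n) (hFW0 (X n)))
      = (LongLine.pos (W n), LongLine.pos (W n)) := fun n => hFW2 (X n)
  have e1 : f (LongLine.pos a) = (LongLine.pos a, LongLine.pos a) := by
    refine tendsto_nhds_unique ?_ (t1.prodMk_nhds t1)
    have := (hf.tendsto (LongLine.pos a)).comp t1
    simpa only [Function.comp_def, hXf] using this
  have e2 : f (mnegPt a ha0) = (LongLine.pos a, LongLine.pos a) := by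
    refine tendsto_nhds_unique ?_ (t2.prodMk_nhds t2)
    have := (hf.tendsto (mnegPt a ha0)).comp t3
    simpa only [Function.comp_def, hYf] using this
  have : LongLine.pos a = mnegPt a ha0 := hinj (e1.trans e2.symm)
  have h := congrArg ofLex this
  exact Sum.inr_ne_inl h
end
end

section
/- The long ray R is not contractible; consequently, a constant map R → R′ is not homotopic to the canonical inclusion R ⊆ R′. -/
open Set Topology
noncomputable section

/-- The extended long ray `R' = ({-1} × [0,1)) ⊔ R`: the long ray with an extra
initial open interval glued below, with the order topology. -/
def LongRay' : Type 1 := (ULift.{1} (Set.Ico (0:ℝ) 1)) ⊕ₗ LongRay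

instance : LinearOrder LongRay' :=
  inferInstanceAs (LinearOrder ((ULift.{1} (Set.Ico (0:ℝ) 1)) ⊕ₗ LongRay))

instance : TopologicalSpace LongRay' := Preorder.topology LongRay'
instance : OrderTopology LongRay' := ⟨rfl⟩

/-- The canonical inclusion `R ⊆ R'`. -/
def LongRay.incl (x : LongRay) : LongRay' := toLex (Sum.inr x)

/-! ### Auxiliary lemmas -/

section Aux

open Filter

lemma ord_lt_add_one (o : Ordinal) : o < o + 1 := by
  rw [Ordinal.add_one_eq_succ]; exact Order.lt_succ o

lemma succ_lt_omega1 {o : Ordinal} (h : o < omega1) : o + 1 < omega1 := by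
  have hl : Order.IsSuccLimit omega1 := Cardinal.isSuccLimit_omega 1
  rw [Ordinal.add_one_eq_succ]; exact hl.succ_lt h

lemma natSup_lt_omega1 (f : ℕ → Ordinal) (h : ∀ n, f n < omega1) :
    (⨆ n, f n) < omega1 := by
  exact Ordinal.iSup_lt_omega_one h

namespace LongRay

/-- Constructor for points of the long ray. -/
def mk (a : {o : Ordinal // o < omega1}) (r : Set.Ico (0:ℝ) 1) : LongRay := toLex (a, r)

/-- The "ordinal part" of a point of the long ray. -/
def idx (x : LongRay) : {o : Ordinal // o < omega1} := (ofLex x).1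

/-- The "fractional part" of a point of the long ray. -/
def frac (x : LongRay) : Set.Ico (0:ℝ) 1 := (ofLex x).2

lemma mk_idx_frac (x : LongRay) : mk (idx x) (frac x) = x := rfl

lemma le_iff {x y : LongRay} :
    x ≤ y ↔ idx x < idx y ∨ idx x = idx y ∧ frac x ≤ frac y :=
  Prod.Lex.le_iff (x := x) (y := y)

lemma lt_iff {x y : LongRay} :
    x < y ↔ idx x < idx y ∨ idx x = idx y ∧ frac x < frac y :=
  Prod.Lex.lt_iff (x := x) (y := y)

lemma idx_mono {x y : LongRay} (h : x ≤ y) : idx x ≤ idx y := by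
  rcases le_iff.1 h with h' | h'
  · exact h'.le
  · exact h'.1.le

lemma frac_le_of_le {x y : LongRay} (h : x ≤ y) (hi : idx x = idx y) :
    frac x ≤ frac y := by
  rcases le_iff.1 h with h' | h'
  · exact absurd h' (by simp [hi])
  · exact h'.2

/-- The real number `0` as an element of `[0,1)`. -/
def rzero : Set.Ico (0:ℝ) 1 := ⟨0, by constructor <;> norm_num⟩

/-- Successor on the index part. -/
def osucc (a : {o : Ordinal // o < omega1}) : {o : Ordinal // o < omega1} :=
  ⟨a.1 + 1, succ_lt_omega1 a.2⟩

lemma lt_osucc (a : {o : Ordinal // o < omega1}) : a < osucc a := by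
  exact ord_lt_add_one a.1

lemma le_of_lt_osucc {a b : {o : Ordinal // o < omega1}} (h : b < osucc a) : b ≤ a := by
  have : b.1 < a.1 + 1 := h
  rw [Ordinal.add_one_eq_succ, Order.lt_succ_iff] at this
  exact this

/-- Every sequence in the long ray is bounded above. -/
lemma exists_seq_bound (f : ℕ → LongRay) : ∃ b, ∀ n, f n ≤ b := by
  have hsup : (⨆ n, (idx (f n)).1) < omega1 :=
    natSup_lt_omega1 _ fun n => (idx (f n)).2
  refine ⟨mk ⟨(⨆ n, (idx (f n)).1) + 1, succ_lt_omega1 hsup⟩ rzero, fun n => ?_⟩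
  refine le_iff.2 (Or.inl ?_)
  show (idx (f n)).1 < (⨆ n, (idx (f n)).1) + 1
  exact lt_of_le_of_lt (le_ciSup (Ordinal.bddAbove_range _) n)
    (ord_lt_add_one _)

end LongRay

namespace LongRay'

lemma cases (z : LongRay') :
    (∃ u, z = toLex (Sum.inl u)) ∨ ∃ x, z = LongRay.incl x := by
  rcases h : ofLex z with u | x
  · exact Or.inl ⟨u, congrArg toLex h⟩
  · exact Or.inr ⟨x, congrArg toLex h⟩

lemma incl_le_incl {x y : LongRay} (h : x ≤ y) : LongRay.incl x ≤ LongRay.incl y :=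
  Sum.Lex.inr_le_inr_iff.2 h

lemma incl_lt_incl {x y : LongRay} (h : x < y) : LongRay.incl x < LongRay.incl y :=
  Sum.Lex.inr_lt_inr_iff.2 h

/-- The inclusion is cofinal (with strict bound). -/
lemma exists_incl_gt (b : LongRay') : ∃ x : LongRay, b < LongRay.incl x := by
  rcases cases b with ⟨u, rfl⟩ | ⟨y, rfl⟩
  · exact ⟨0, Sum.Lex.inl_lt_inr _ _⟩
  · refine ⟨LongRay.mk (LongRay.osucc (LongRay.idx y)) LongRay.rzero, incl_lt_incl ?_⟩
    exact LongRay.lt_iff.2 (Or.inl (LongRay.lt_osucc _))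

/-- Every sequence in the extended long ray is bounded above. -/
lemma exists_seq_bound (f : ℕ → LongRay') : ∃ b, ∀ n, f n ≤ b := by
  classical
  set g : ℕ → LongRay := fun n =>
    if h : ∃ x, f n = LongRay.incl x then h.choose else 0 with hg
  obtain ⟨b, hb⟩ := LongRay.exists_seq_bound g
  refine ⟨LongRay.incl b, fun n => ?_⟩
  rcases cases (f n) with ⟨u, hu⟩ | ⟨x, hx⟩
  · rw [hu]; exact Sum.Lex.inl_le_inr _ _
  · have h : ∃ x, f n = LongRay.incl x := ⟨x, hx⟩
    have hgn : g n = h.choose := by rw [hg]; simp [h]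
    rw [h.choose_spec]
    exact incl_le_incl (hgn ▸ hb n)

end LongRay'

/-! ### Least upper bounds / greatest lower bounds of monotone sequences -/

namespace LongRay

lemma exists_isLUB_of_monotone {f : ℕ → LongRay} (hf : Monotone f)
    {b : LongRay} (hb : ∀ n, f n ≤ b) : ∃ l, IsLUB (Set.range f) l := by
  classical
  set a : ℕ → {o : Ordinal // o < omega1} := fun n => idx (f n) with ha
  have hamono : Monotone a := fun m n h => idx_mono (hf h)
  by_cases hatt : ∃ N, ∀ n, a n ≤ a N
  · obtain ⟨N, hN⟩ := hatt
    have haeq : ∀ n, a (N + n) = a N :=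
      fun n => le_antisymm (hN _) (hamono (Nat.le_add_right N n))
    set rr : ℕ → ℝ := fun n => (frac (f (N + n)) : ℝ) with hrr
    have hrr01 : ∀ n, rr n ∈ Set.Ico (0:ℝ) 1 := fun n => (frac (f (N + n))).2
    have hbdd : BddAbove (Set.range rr) :=
      ⟨1, by rintro _ ⟨n, rfl⟩; exact (hrr01 n).2.le⟩
    set s : ℝ := ⨆ n, rr n with hs
    have hs0 : 0 ≤ s := le_trans (hrr01 0).1 (le_ciSup hbdd 0)
    have hsle : ∀ n, rr n ≤ s := fun n => le_ciSup hbdd n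
    have hub : ∀ u : LongRay, u ∈ upperBounds (Set.range f) →
        (idx u = a N → ∀ n, rr n ≤ (frac u : ℝ)) ∧ a N ≤ idx u := by
      intro u hu
      constructor
      · intro hi n
        exact frac_le_of_le (hu ⟨N + n, rfl⟩) ((haeq n).trans hi.symm)
      · exact idx_mono (hu ⟨N, rfl⟩)
    by_cases hs1 : s < 1
    · refine ⟨mk (a N) ⟨s, hs0, hs1⟩, ?_, ?_⟩
      · rintro _ ⟨n, rfl⟩
        have h1 : f n ≤ f (N + n) := hf (Nat.le_add_left n N)
        refine h1.trans (le_iff.2 (Or.inr ⟨haeq n, ?_⟩))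
        exact Subtype.coe_le_coe.1 (hsle n)
      · intro u hu
        rcases lt_trichotomy (idx u) (a N) with h | h | h
        · exact absurd (hub u hu).2 (not_le.2 h)
        · refine le_iff.2 (Or.inr ⟨h.symm, ?_⟩)
          exact Subtype.coe_le_coe.1 (ciSup_le ((hub u hu).1 h))
        · exact le_iff.2 (Or.inl h)
    · have hseq : s = 1 :=
        le_antisymm (ciSup_le fun n => (hrr01 n).2.le) (not_lt.1 hs1)
      refine ⟨mk (osucc (a N)) rzero, ?_, ?_⟩
      · rintro _ ⟨n, rfl⟩
        have h1 : f n ≤ f (N + n) := hf (Nat.le_add_left n N)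
        exact h1.trans (le_iff.2 (Or.inl ((haeq n) ▸ lt_osucc (a N))))
      · intro u hu
        rcases lt_trichotomy (idx u) (osucc (a N)) with h | h | h
        · exfalso
          have hle : idx u ≤ a N := le_of_lt_osucc h
          have hieq : idx u = a N := le_antisymm hle (hub u hu).2
          have : (1:ℝ) ≤ (frac u : ℝ) :=
            hseq.symm.le.trans (ciSup_le ((hub u hu).1 hieq))
          exact absurd (frac u).2.2 (not_lt.2 this)
        · refine le_iff.2 (Or.inr ⟨h.symm, ?_⟩)
          exact Subtype.coe_le_coe.1 (frac u).2.1
        · exact le_iff.2 (Or.inl h)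
  · push_neg at hatt
    have hub' : BddAbove (Set.range fun n => (a n).1) := Ordinal.bddAbove_range _
    set α : Ordinal := ⨆ n, (a n).1 with hα
    have hαlt : α < omega1 := natSup_lt_omega1 _ fun n => (a n).2
    have halt : ∀ n, (a n).1 < α := by
      intro n
      obtain ⟨m, hm⟩ := hatt n
      exact lt_of_lt_of_le hm (le_ciSup hub' m)
    refine ⟨mk ⟨α, hαlt⟩ rzero, ?_, ?_⟩
    · rintro _ ⟨n, rfl⟩
      exact le_iff.2 (Or.inl (halt n))
    · intro u hu
      rcases lt_trichotomy (idx u) (⟨α, hαlt⟩ : {o : Ordinal // o < omega1}) with h | h | h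
      · exfalso
        have : (idx u).1 < ⨆ n, (a n).1 := h
        obtain ⟨n, hn⟩ := (lt_ciSup_iff hub').1 this
        exact absurd (idx_mono (hu ⟨n, rfl⟩)) (not_le.2 hn)
      · refine le_iff.2 (Or.inr ⟨h.symm, ?_⟩)
        exact Subtype.coe_le_coe.1 (frac u).2.1
      · exact le_iff.2 (Or.inl h)

lemma exists_isGLB_of_antitone {f : ℕ → LongRay} (hf : Antitone f) :
    ∃ l, IsGLB (Set.range f) l := by
  classical
  set a : ℕ → {o : Ordinal // o < omega1} := fun n => idx (f n) with ha
  have haanti : Antitone a := fun m n h => idx_mono (hf h)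
  obtain ⟨o, ⟨N, hNo⟩, hmin⟩ := wellFounded_lt.has_min
    (Set.range fun n => (a n).1) ⟨(a 0).1, 0, rfl⟩
  have hNmin : ∀ n, a N ≤ a n := by
    intro n
    have := hmin (a n).1 ⟨n, rfl⟩
    rw [← hNo] at this
    exact not_lt.1 this
  have haeq : ∀ n, a (N + n) = a N :=
    fun n => le_antisymm (haanti (Nat.le_add_right N n)) (hNmin _)
  set rr : ℕ → ℝ := fun n => (frac (f (N + n)) : ℝ) with hrr
  have hrr01 : ∀ n, rr n ∈ Set.Ico (0:ℝ) 1 := fun n => (frac (f (N + n))).2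
  have hbdd : BddBelow (Set.range rr) :=
    ⟨0, by rintro _ ⟨n, rfl⟩; exact (hrr01 n).1⟩
  set s : ℝ := ⨅ n, rr n with hs
  have hs0 : 0 ≤ s := le_ciInf fun n => (hrr01 n).1
  have hs1 : s < 1 := lt_of_le_of_lt (ciInf_le hbdd 0) (hrr01 0).2
  refine ⟨mk (a N) ⟨s, hs0, hs1⟩, ?_, ?_⟩
  · rintro _ ⟨n, rfl⟩
    have h1 : f (N + n) ≤ f n := hf (Nat.le_add_left n N)
    refine le_trans (le_iff.2 (Or.inr ⟨(haeq n).symm, ?_⟩)) h1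
    exact Subtype.coe_le_coe.1 (ciInf_le hbdd n)
  · intro u hu
    rcases lt_trichotomy (idx u) (a N) with h | h | h
    · exact le_iff.2 (Or.inl h)
    · refine le_iff.2 (Or.inr ⟨h, ?_⟩)
      refine Subtype.coe_le_coe.1 (le_ciInf fun n => ?_)
      exact frac_le_of_le (hu ⟨N + n, rfl⟩) (h.trans (haeq n).symm)
    · exfalso
      have := idx_mono (hu ⟨N, rfl⟩)
      exact absurd this (not_le.2 h)

/-- Sequential compactness of the long ray. -/
lemma exists_tendsto_subseq (x : ℕ → LongRay) :
    ∃ (l : LongRay) (φ : ℕ → ℕ), StrictMono φ ∧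
      Tendsto (x ∘ φ) atTop (𝓝 l) := by
  haveI : IsTrans LongRay (· < ·) := ⟨fun _ _ _ => lt_trans⟩
  obtain ⟨g, hg | hg⟩ := exists_increasing_or_nonincreasing_subseq (· < ·) x
  · have hmono : Monotone (x ∘ g) := by
      intro m n h
      rcases eq_or_lt_of_le h with rfl | h'
      · exact le_rfl
      · exact (hg m n h').le
    obtain ⟨b, hb⟩ := exists_seq_bound (x ∘ g)
    obtain ⟨l, hl⟩ := exists_isLUB_of_monotone hmono hb
    exact ⟨l, g, g.strictMono, tendsto_atTop_isLUB hmono hl⟩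
  · have hanti : Antitone (x ∘ g) := by
      intro m n h
      rcases eq_or_lt_of_le h with rfl | h'
      · exact le_rfl
      · exact not_lt.1 (hg m n h')
    obtain ⟨l, hl⟩ := exists_isGLB_of_antitone hanti
    exact ⟨l, g, g.strictMono, tendsto_atTop_isGLB hanti hl⟩

/-- The inclusion `R ⊆ R'` is continuous. -/
lemma incl_continuous : Continuous LongRay.incl := by
  have htop : (instTopologicalSpaceLongRay' : TopologicalSpace LongRay') =
      TopologicalSpace.generateFrom { s | ∃ a : LongRay', s = Ioi a ∨ s = Iio a } :=
    OrderTopology.topology_eq_generate_intervals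
  rw [continuous_iff_coinduced_le, htop, TopologicalSpace.le_generateFrom_iff_subset_isOpen]
  rintro s ⟨a, rfl | rfl⟩ <;> rw [mem_setOf_eq, isOpen_coinduced] <;>
    rcases LongRay'.cases a with ⟨u, rfl⟩ | ⟨y, rfl⟩
  · have : LongRay.incl ⁻¹' Ioi (toLex (Sum.inl u)) = univ := by
      ext z; simp only [mem_preimage, mem_Ioi, mem_univ, iff_true]
      exact Sum.Lex.inl_lt_inr _ _
    rw [this]; exact isOpen_univ
  · have : LongRay.incl ⁻¹' Ioi (LongRay.incl y) = Ioi y := by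
      ext z; simp only [mem_preimage, mem_Ioi]
      exact Sum.Lex.inr_lt_inr_iff
    rw [this]; exact isOpen_Ioi
  · have : LongRay.incl ⁻¹' Iio (toLex (Sum.inl u)) = ∅ := by
      ext z; simp only [mem_preimage, mem_Iio, mem_empty_iff_false, iff_false]
      exact Sum.Lex.not_inr_lt_inl
    rw [this]; exact isOpen_empty
  · have : LongRay.incl ⁻¹' Iio (LongRay.incl y) = Iio y := by
      ext z; simp only [mem_preimage, mem_Iio]
      exact Sum.Lex.inr_lt_inr_iff
    rw [this]; exact isOpen_Iio

end LongRay

/-! ### The main homotopy argument -/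

lemma longRay_no_homotopy (c : LongRay') :
    ¬ ∃ H : ℝ × LongRay → LongRay', Continuous H ∧
      (∀ x, H (0, x) = c) ∧ (∀ x, H (1, x) = LongRay.incl x) := by
  rintro ⟨H, hH, h0, h1⟩
  set B : Set ℝ := {t | ∃ b, ∀ x, H (t, x) ≤ b} with hBdef
  have hB0 : (0:ℝ) ∈ B := ⟨c, fun x => (h0 x).le⟩
  have hB1 : (1:ℝ) ∉ B := by
    rintro ⟨b, hb⟩
    obtain ⟨x, hx⟩ := LongRay'.exists_incl_gt b
    have := hb x
    rw [h1 x] at this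
    exact absurd this (not_le.2 hx)
  have hclosedB : IsClosed B := by
    refine IsSeqClosed.isClosed ?_
    intro u t hu hut
    choose b hb using hu
    obtain ⟨b', hb'⟩ := LongRay'.exists_seq_bound b
    refine ⟨b', fun x => ?_⟩
    have htend : Tendsto (fun n => H (u n, x)) atTop (𝓝 (H (t, x))) :=
      (hH.tendsto (t, x)).comp (hut.prodMk_nhds tendsto_const_nhds)
    exact le_of_tendsto htend (Eventually.of_forall fun n => (hb n x).trans (hb' n))
  have hclosedBc : IsClosed Bᶜ := by
    refine IsSeqClosed.isClosed ?_
    intro u t hu hut htB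
    obtain ⟨b, hb⟩ := htB
    obtain ⟨b', hb'⟩ := LongRay'.exists_incl_gt b
    have hx : ∀ n, ∃ x, LongRay.incl b' ≤ H (u n, x) := by
      intro n
      by_contra hcon
      push_neg at hcon
      exact hu n ⟨LongRay.incl b', fun x => (hcon x).le⟩
    choose x hxx using hx
    obtain ⟨l, φ, hφ, hl⟩ := LongRay.exists_tendsto_subseq x
    have huφ : Tendsto (u ∘ φ) atTop (𝓝 t) := hut.comp hφ.tendsto_atTop
    have htend : Tendsto (fun k => H (u (φ k), x (φ k))) atTop (𝓝 (H (t, l))) :=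
      (hH.tendsto (t, l)).comp (huφ.prodMk_nhds hl)
    have hge : LongRay.incl b' ≤ H (t, l) :=
      ge_of_tendsto htend (Eventually.of_forall fun k => hxx (φ k))
    exact absurd (hge.trans (hb l)) (not_le.2 hb')
  have hclopen : IsClopen B := ⟨hclosedB, by
    have := hclosedBc.isOpen_compl
    rwa [compl_compl] at this⟩
  rcases isClopen_iff.1 hclopen with h | h
  · rw [h] at hB0; exact hB0
  · exact hB1 (h ▸ mem_univ (1:ℝ))

lemma longRay_not_contractibleSpace : ¬ ContractibleSpace LongRay := by
  intro hc
  obtain ⟨y, hy⟩ := id_nullhomotopic LongRay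
  obtain ⟨G⟩ := hy
  let K := G.symm
  apply longRay_no_homotopy (LongRay.incl y)
  refine ⟨fun p => LongRay.incl (K (Set.projIcc 0 1 zero_le_one p.1, p.2)), ?_, ?_, ?_⟩
  · exact LongRay.incl_continuous.comp (K.continuous.comp
      ((continuous_projIcc.comp continuous_fst).prodMk continuous_snd))
  · intro x
    show LongRay.incl (K (Set.projIcc 0 1 zero_le_one 0, x)) = LongRay.incl y
    have hproj : Set.projIcc (0:ℝ) 1 zero_le_one 0 = 0 := by simp
    rw [hproj]
    have hz := K.apply_zero x
    simp only [ContinuousMap.const_apply] at hz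
    rw [hz]
  · intro x
    show LongRay.incl (K (Set.projIcc 0 1 zero_le_one 1, x)) = LongRay.incl x
    have hproj : Set.projIcc (0:ℝ) 1 zero_le_one 1 = 1 := by simp
    rw [hproj]
    have hz := K.apply_one x
    simp only [ContinuousMap.id_apply] at hz
    rw [hz]

end Aux

/-- The long ray is not contractible; consequently no constant map `R → R'` is homotopic
to the canonical inclusion `R ⊆ R'`. -/
theorem longRay_not_contractible :
    ¬ ContractibleSpace LongRay ∧
    ∀ c : LongRay', ¬ ∃ H : ℝ × LongRay → LongRay', Continuous H ∧
      (∀ x, H (0, x) = c) ∧ (∀ x, H (1, x) = LongRay.incl x) := by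
  exact ⟨longRay_not_contractibleSpace, longRay_no_homotopy⟩
end
end

section
/- There are exactly 3 realizable directions for continuous embeddings R → R², namely (1,0), (0,1), (1,1); each is realized by an embedding, and (0,0) is not realizable. -/
open Set Topology
noncomputable section

namespace LongRayAux

lemma le_iff' (a b : LongRay) : a ≤ b ↔
    (ofLex a).1 < (ofLex b).1 ∨ (ofLex a).1 = (ofLex b).1 ∧ (ofLex a).2 ≤ (ofLex b).2 :=
  Prod.Lex.le_iff

lemma lt_iff' (a b : LongRay) : a < b ↔
    (ofLex a).1 < (ofLex b).1 ∨ (ofLex a).1 = (ofLex b).1 ∧ (ofLex a).2 < (ofLex b).2 :=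
  Prod.Lex.lt_iff

lemma zero_le (x : LongRay) : (0 : LongRay) ≤ x := by
  rw [le_iff']
  rcases lt_or_eq_of_le (_root_.zero_le (a := ((ofLex x).1 : Ordinal))) with h | h
  · exact Or.inl (Subtype.coe_lt_coe.1 h)
  · refine Or.inr ⟨Subtype.ext h, ?_⟩
    exact Subtype.mk_le_mk.2 (ofLex x).2.2.1

lemma ord_le_of_le {x y : LongRay} (h : x ≤ y) :
    ((ofLex x).1 : Ordinal) ≤ (ofLex y).1 := by
  rw [le_iff'] at h
  rcases h with h | ⟨h, -⟩
  · exact le_of_lt (Subtype.coe_lt_coe.2 h)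
  · exact le_of_eq (congrArg Subtype.val h)

/-- The set of points with rational real part. -/
def T : Set LongRay := {x | ∃ q : ℚ, ((ofLex x).2 : ℝ) = q}

lemma exists_rat_btwn {x y : LongRay} (h : x < y) :
    ∃ z ∈ T, x < z ∧ z < y := by
  rw [lt_iff'] at h
  rcases h with h | ⟨h1, h2⟩
  · obtain ⟨q, hq1, hq2⟩ := _root_.exists_rat_btwn (show ((ofLex x).2 : ℝ) < 1 from (ofLex x).2.2.2)
    refine ⟨toLex ((ofLex x).1, ⟨q, ⟨le_trans (ofLex x).2.2.1 hq1.le, hq2⟩⟩), ⟨q, rfl⟩, ?_, ?_⟩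
    · refine (lt_iff' _ _).2 ?_; exact Or.inr ⟨rfl, Subtype.mk_lt_mk.2 hq1⟩
    · refine (lt_iff' _ _).2 ?_; exact Or.inl h
  · obtain ⟨q, hq1, hq2⟩ := _root_.exists_rat_btwn (show ((ofLex x).2 : ℝ) < (ofLex y).2 from h2)
    refine ⟨toLex ((ofLex x).1, ⟨q, ⟨le_trans (ofLex x).2.2.1 hq1.le,
        lt_trans hq2 (ofLex y).2.2.2⟩⟩), ⟨q, rfl⟩, ?_, ?_⟩
    · refine (lt_iff' _ _).2 ?_; exact Or.inr ⟨rfl, Subtype.mk_lt_mk.2 hq1⟩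
    · refine (lt_iff' _ _).2 ?_; exact Or.inr ⟨h1, Subtype.mk_lt_mk.2 hq2⟩

instance : DenselyOrdered LongRay :=
  ⟨fun _ _ h => let ⟨z, _, h1, h2⟩ := exists_rat_btwn h; ⟨z, h1, h2⟩⟩

instance : NoMaxOrder LongRay := by
  constructor
  intro x
  obtain ⟨q, hq1, hq2⟩ := _root_.exists_rat_btwn (show ((ofLex x).2 : ℝ) < 1 from (ofLex x).2.2.2)
  refine ⟨toLex ((ofLex x).1, ⟨q, ⟨le_trans (ofLex x).2.2.1 hq1.le, hq2⟩⟩), ?_⟩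
  refine (lt_iff' _ _).2 ?_; exact Or.inr ⟨rfl, Subtype.mk_lt_mk.2 hq1⟩

lemma countable_Iic_ordinal {o : Ordinal} (h : o < omega1) : (Set.Iic o).Countable := by
  have h1 : Order.succ o < omega1 := by
    have he : omega1 = (Cardinal.aleph 1).ord := (Cardinal.ord_aleph 1).symm
    rw [he] at h ⊢
    exact (Cardinal.isSuccLimit_ord (Cardinal.aleph0_le_aleph 1)).succ_lt h
  have h2 : (Order.succ o).card < Cardinal.aleph 1 := by
    rwa [omega1, ← Cardinal.ord_aleph, Cardinal.lt_ord] at h1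
  have h3 : (Order.succ o).card ≤ Cardinal.aleph0 := by
    rwa [← Cardinal.succ_aleph0, Order.lt_succ_iff] at h2
  have h4 : Set.Iic o = Set.Iio (Order.succ o) := by
    ext x; simp [Order.lt_succ_iff]
  rw [h4, ← Set.countable_coe_iff, ← Cardinal.mk_le_aleph0_iff, Ordinal.mk_Iio_ordinal]
  exact le_trans (Cardinal.lift_le.2 h3) (le_of_eq Cardinal.lift_aleph0)

lemma uncountable_Iio : ¬ (Set.Iio omega1).Countable := by
  intro h
  have h2 := (Cardinal.countable_iff_lt_aleph_one _).1 h
  rw [Ordinal.mk_Iio_ordinal, show omega1.card = Cardinal.aleph 1 from Ordinal.card_omega 1,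
    Cardinal.lift_aleph, Ordinal.lift_one] at h2
  exact lt_irrefl _ h2

lemma not_denseCountable (S : Set LongRay) (hc : S.Countable) : ¬ Dense S := by
  intro hd
  have hUc : (⋃ s ∈ S, Set.Iic ((ofLex s).1 : Ordinal)).Countable :=
    hc.biUnion fun s _ => countable_Iic_ordinal (ofLex s).1.2
  have hns : ¬ Set.Iio omega1 ⊆ ⋃ s ∈ S, Set.Iic ((ofLex s).1 : Ordinal) :=
    fun h => uncountable_Iio (hUc.mono h)
  obtain ⟨α, hα1, hα2⟩ := Set.not_subset.1 hns
  have hαs : ∀ s ∈ S, ((ofLex s).1 : Ordinal) < α := by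
    intro s hs
    by_contra hle
    exact hα2 (Set.mem_biUnion hs (not_lt.1 hle))
  set y : LongRay := toLex (⟨α, hα1⟩, ⟨0, by constructor <;> norm_num⟩) with hy
  obtain ⟨z, hz⟩ := exists_gt y
  obtain ⟨s, hs1, hs2, -⟩ := hd.exists_between hz
  have hlt : s < y := by
    rw [lt_iff']
    exact Or.inl (Subtype.coe_lt_coe.1 (hαs s hs1))
  exact absurd hs2 (not_lt.2 hlt.le)

lemma countable_T_inter_Iic (b : LongRay) : (Set.Iic b ∩ T).Countable := by
  have hinj : Function.Injective
      (fun x : LongRay => (((ofLex x).1 : Ordinal), ((ofLex x).2 : ℝ))) := by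
    intro x y h
    obtain ⟨h1, h2⟩ := Prod.ext_iff.1 h
    have he : ofLex x = ofLex y := Prod.ext (Subtype.ext h1) (Subtype.ext h2)
    exact ofLex.injective he
  have hsub : Set.Iic b ∩ T ⊆
      (fun x : LongRay => (((ofLex x).1 : Ordinal), ((ofLex x).2 : ℝ))) ⁻¹'
        ((Set.Iic ((ofLex b).1 : Ordinal)) ×ˢ (Set.range ((↑) : ℚ → ℝ))) := by
    rintro x ⟨hx1, q, hq⟩
    exact ⟨ord_le_of_le hx1, q, hq.symm⟩
  exact (((countable_Iic_ordinal (ofLex b).1.2).prod (Set.countable_range _)).preimage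
    hinj).mono hsub

lemma separable_Iic (b : LongRay) (hb : (0:LongRay) < b) :
    TopologicalSpace.SeparableSpace (Set.Iic b) := by
  haveI : Set.OrdConnected (Set.Iic b) := Set.ordConnected_Iic
  haveI : Nontrivial (Set.Iic b) :=
    ⟨⟨⟨0, hb.le⟩, ⟨b, Set.mem_Iic.2 le_rfl⟩, fun he => hb.ne (congrArg Subtype.val he)⟩⟩
  refine ⟨⟨Subtype.val ⁻¹' T, ?_, ?_⟩⟩
  · have hsub : (Subtype.val ⁻¹' T : Set (Set.Iic b)) ⊆ Subtype.val ⁻¹' (Set.Iic b ∩ T) :=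
      fun x hx => ⟨x.2, hx⟩
    exact ((countable_T_inter_Iic b).preimage Subtype.val_injective).mono hsub
  · rw [dense_iff_exists_between]
    rintro u v huv
    obtain ⟨z, hzT, h1, h2⟩ := exists_rat_btwn (show (u:LongRay) < v from huv)
    exact ⟨⟨z, le_trans h2.le v.2⟩, hzT, Subtype.mk_lt_mk.2 h1, Subtype.mk_lt_mk.2 h2⟩

lemma no_bounded_embedding (f : LongRay → LongRay × LongRay) (hf : Topology.IsEmbedding f)
    (h1 : ¬ Cofinal fun x => (f x).1) (h2 : ¬ Cofinal fun x => (f x).2) : False := by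
  simp only [Cofinal, not_forall, not_exists, not_le] at h1 h2
  obtain ⟨b₁, hb₁⟩ := h1
  obtain ⟨b₂, hb₂⟩ := h2
  have pos₁ : (0:LongRay) < b₁ := lt_of_le_of_lt (zero_le _) (hb₁ 0)
  have pos₂ : (0:LongRay) < b₂ := lt_of_le_of_lt (zero_le _) (hb₂ 0)
  haveI : Set.OrdConnected (Set.Iic b₁) := Set.ordConnected_Iic
  haveI : Set.OrdConnected (Set.Iic b₂) := Set.ordConnected_Iic
  haveI := separable_Iic b₁ pos₁
  haveI := separable_Iic b₂ pos₂
  haveI : SecondCountableTopology (Set.Iic b₁) :=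
    SecondCountableTopology.of_separableSpace_orderTopology _
  haveI : SecondCountableTopology (Set.Iic b₂) :=
    SecondCountableTopology.of_separableSpace_orderTopology _
  set g : LongRay → (Set.Iic b₁) × (Set.Iic b₂) :=
    fun x => (⟨(f x).1, (hb₁ x).le⟩, ⟨(f x).2, (hb₂ x).le⟩) with hg0
  have hgc : Continuous g :=
    Continuous.prodMk (hf.continuous.fst.subtype_mk _) (hf.continuous.snd.subtype_mk _)
  have hg : Topology.IsEmbedding g :=
    Topology.IsEmbedding.of_comp hgc
      (continuous_subtype_val.prodMap continuous_subtype_val) (by exact hf)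
  haveI : SecondCountableTopology LongRay := hg.secondCountableTopology
  obtain ⟨S, hSc, hSd⟩ := TopologicalSpace.exists_countable_dense LongRay
  exact not_denseCountable S hSc hSd

lemma cofinal_id : Cofinal (fun x => x) := fun b => ⟨b, le_rfl⟩

lemma not_cofinal_zero : ¬ Cofinal (fun _ => (0:LongRay)) := by
  intro h
  obtain ⟨z, hz⟩ := exists_gt (0:LongRay)
  obtain ⟨x, hx⟩ := h z
  exact absurd hx (not_le.2 hz)

lemma emb₁ : Topology.IsEmbedding (fun x : LongRay => (x, (0:LongRay))) :=
  (Homeomorph.prodComm LongRay LongRay).isEmbedding.comp (isEmbedding_prodMkRight 0)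

lemma emb₂ : Topology.IsEmbedding (fun x : LongRay => ((0:LongRay), x)) :=
  isEmbedding_prodMkRight 0

lemma emb₃ : Topology.IsEmbedding (fun x : LongRay => (x, x)) :=
  isEmbedding_graph continuous_id

end LongRayAux

open LongRayAux in
/-- The directions realized by continuous embeddings `R → R²` are exactly
`(1,0)`, `(0,1)` and `(1,1)` (encoded by booleans: `true` = cofinal, `false` = bounded). -/
theorem directions_of_R2_knots :
    {p : Bool × Bool | ∃ f : LongRay → LongRay × LongRay, Topology.IsEmbedding f ∧
        (p.1 = true ↔ Cofinal (fun x => (f x).1)) ∧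
        (p.2 = true ↔ Cofinal (fun x => (f x).2))} =
      {(true, false), (false, true), (true, true)} := by
  ext ⟨p₁, p₂⟩
  simp only [Set.mem_setOf_eq, Set.mem_insert_iff, Set.mem_singleton_iff, Prod.mk.injEq]
  constructor
  · rintro ⟨f, hf, hc1, hc2⟩
    cases p₁ <;> cases p₂
    · exact absurd (no_bounded_embedding f hf
        (fun h => by simpa using hc1.2 h)
        (fun h => by simpa using hc2.2 h)) id
    · simp
    · simp
    · simp
  · rintro (⟨rfl, rfl⟩ | ⟨rfl, rfl⟩ | ⟨rfl, rfl⟩)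
    · exact ⟨fun x => (x, 0), emb₁, iff_of_true rfl cofinal_id,
        iff_of_false (by simp) not_cofinal_zero⟩
    · exact ⟨fun x => (0, x), emb₂, iff_of_false (by simp) not_cofinal_zero,
        iff_of_true rfl cofinal_id⟩
    · exact ⟨fun x => (x, x), emb₃, iff_of_true rfl cofinal_id, iff_of_true rfl cofinal_id⟩
end
end

section
/- Let f be a C¹ embedding R → R³ of the long ray with all three coordinate projections cofinal, and let (x_α)_{α<ω₁} be a decomposition as in the partition lemma (f(x_α) = (x_α,x_α,x_α) and f([x_α,x_{α+1}]) ⊆ [x_α,x_{α+1}]³). Then for all but finitely many α, there exists an index i ∈ {1,2,3} such that πᵢ∘f is monotone on [x_α, x_{α+1}]. -/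
open Set Topology
noncomputable section

lemma longRay_zero_le (t : LongRay) : (0 : LongRay) ≤ t := by
  refine (Prod.Lex.le_iff (x := (0 : LongRay)) (y := t)).mpr ?_
  rcases eq_or_lt_of_le (zero_le (a := (ofLex t).1.1)) with heq | hlt
  · exact Or.inr ⟨Subtype.ext heq, Subtype.coe_le_coe.mp (ofLex t).2.2.1⟩
  · exact Or.inl (Subtype.coe_lt_coe.mp hlt)

lemma exists_strictMono_mem {S : Set Ordinal} (hS : S.Infinite) :
    ∃ g : ℕ → Ordinal, StrictMono g ∧ ∀ n, g n ∈ S := by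
  let F : ℕ → Ordinal := fun n => (hS.natEmbedding S n : Ordinal)
  have hFinj : Function.Injective F := fun m n hEq =>
    (hS.natEmbedding S).injective (Subtype.ext hEq)
  have hFmem : ∀ n, F n ∈ S := fun n => (hS.natEmbedding S n).2
  obtain ⟨g, hg | hg⟩ := exists_increasing_or_nonincreasing_subseq' (· < ·) F
  · exact ⟨F ∘ g, strictMono_nat_of_lt_succ fun n => hg n, fun n => hFmem _⟩
  · exfalso
    have hdec : ∀ n, F (g (n+1)) < F (g n) := by
      intro n
      have h1 := hg n (n+1) n.lt_succ_self
      have h2 : F (g (n+1)) ≠ F (g n) := fun hEq =>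
        Nat.succ_ne_self n (g.injective (hFinj hEq))
      exact lt_of_le_of_ne (not_lt.1 h1) h2
    exact (RelEmbedding.natGT (fun n => F (g n)) hdec).not_wellFounded
      Ordinal.lt_wf

/-- Let `f` be a C¹ embedding `R → R³` with all three coordinate projections cofinal, and
`(x_α)` a decomposition as in the partition lemma (`f(x_α)` on the diagonal,
`f([x_α,x_{α+1}]) ⊆ [x_α,x_{α+1}]³`). The C¹ hypothesis is expressed in charts: on each
initial segment `[0,z]`, `f` is represented by a C¹ immersion `F : ℝ → ℝ³` through a
strictly monotone continuous chart `e`. Then for all but finitely many `α` some coordinate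
`πᵢ ∘ f` is monotone on `[x_α, x_{α+1}]`. -/
theorem eventually_some_coordinate_monotone
    (f : LongRay → Fin 3 → LongRay) (hf : Topology.IsEmbedding f)
    (hcof : ∀ i : Fin 3, Cofinal fun t => f t i)
    (x : Ordinal → LongRay)
    (hmono : ∀ α β, α < β → β < omega1 → x α < x β)
    (hlim : ∀ β, β < omega1 → Order.IsSuccLimit β → IsLUB (x '' {α | α < β}) (x β))
    (hdiag : ∀ α, 0 < α → α < omega1 → ∀ i, f (x α) i = x α)
    (hcube : ∀ α, 0 < α → α < omega1 →
      ∀ t ∈ Set.Icc (x α) (x (α + 1)), ∀ i, f t i ∈ Set.Icc (x α) (x (α + 1)))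
    (hC1 : ∀ z : LongRay, ∃ (e : LongRay → ℝ) (F : ℝ → Fin 3 → ℝ),
      StrictMonoOn e (Set.Icc 0 z) ∧ ContinuousOn e (Set.Icc 0 z) ∧
      ContDiff ℝ 1 F ∧ (∀ t : ℝ, deriv F t ≠ 0) ∧
      ∀ t ∈ Set.Icc 0 z, (∀ i, f t i ∈ Set.Icc 0 z) → ∀ i, F (e t) i = e (f t i)) :
    {α : Ordinal | 0 < α ∧ α < omega1 ∧
      ¬ ∃ i : Fin 3, MonotoneOn (fun t => f t i) (Set.Icc (x α) (x (α + 1))) ∨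
          AntitoneOn (fun t => f t i) (Set.Icc (x α) (x (α + 1)))}.Finite := by
  by_contra hfin
  have hS : {α : Ordinal | 0 < α ∧ α < omega1 ∧
      ¬ ∃ i : Fin 3, MonotoneOn (fun t => f t i) (Set.Icc (x α) (x (α + 1))) ∨
          AntitoneOn (fun t => f t i) (Set.Icc (x α) (x (α + 1)))}.Infinite := hfin
  obtain ⟨h, hmonoh, hmem⟩ := exists_strictMono_mem hS
  simp only [Set.mem_setOf_eq] at hmem
  have hpos : ∀ n, 0 < h n := fun n => (hmem n).1
  have hlt : ∀ n, h n < omega1 := fun n => (hmem n).2.1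
  have hbad : ∀ n, ¬ ∃ i : Fin 3,
      MonotoneOn (fun t => f t i) (Set.Icc (x (h n)) (x (h n + 1))) ∨
      AntitoneOn (fun t => f t i) (Set.Icc (x (h n)) (x (h n + 1))) :=
    fun n => (hmem n).2.2
  have hωlim : Order.IsSuccLimit omega1 := Cardinal.isSuccLimit_omega 1
  set β := ⨆ n, h n with hβdef
  have hβlt : β < omega1 := by
    have h1 : ∀ n, h n < (Cardinal.aleph 1).ord := by
      intro n; rw [Cardinal.ord_aleph]; exact hlt n
    have h2 : ⨆ n, h n < omega1 := Ordinal.iSup_lt_omega_one hlt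
    exact h2
  have hle : ∀ n, h n ≤ β := fun n => Ordinal.le_iSup h n
  have hhβ : ∀ n, h n < β := fun n => lt_of_lt_of_le (hmonoh n.lt_succ_self) (hle (n+1))
  have hβlim : Order.IsSuccLimit β := by
    rw [Ordinal.isSuccLimit_iff, Order.isSuccPrelimit_iff_succ_lt]
    constructor
    · intro h0
      have := hhβ 0
      rw [h0] at this
      exact not_lt_zero this
    · intro γ hγ
      obtain ⟨n, hn⟩ := Ordinal.lt_iSup_iff.1 hγ
      exact lt_of_le_of_lt (Order.succ_le_of_lt hn)
        (lt_of_lt_of_le (hmonoh n.lt_succ_self) (hle (n+1)))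
  have hsucclt : ∀ n, h n + 1 < β := fun n => by
    rw [Ordinal.add_one_eq_succ]; exact hβlim.succ_lt (hhβ n)
  have hsuccω : ∀ γ, γ < omega1 → γ + 1 < omega1 := fun γ hγ => by
    rw [Ordinal.add_one_eq_succ]; exact hωlim.succ_lt hγ
  have hxmono : ∀ γ δ, γ ≤ δ → δ < omega1 → x γ ≤ x δ := by
    intro γ δ hγδ hδ
    rcases eq_or_lt_of_le hγδ with rfl | hlt'
    · exact le_rfl
    · exact (hmono _ _ hlt' hδ).le
  have hisLUB : IsLUB (Set.range fun n => x (h n)) (x β) := by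
    constructor
    · rintro _ ⟨n, rfl⟩
      exact (hmono _ _ (hhβ n) hβlt).le
    · intro c hc
      refine (hlim β hβlt hβlim).2 ?_
      rintro _ ⟨γ, hγ, rfl⟩
      obtain ⟨n, hn⟩ := Ordinal.lt_iSup_iff.1 hγ
      exact le_trans (hxmono γ (h n) hn.le (hlt n)) (hc ⟨n, rfl⟩)
  have hxseq_mono : Monotone fun n => x (h n) := fun m n hmn =>
    hxmono _ _ (hmonoh.monotone hmn) (hlt n)
  have htend : Filter.Tendsto (fun n => x (h n)) Filter.atTop (nhds (x β)) :=
    tendsto_atTop_isLUB hxseq_mono hisLUB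
  obtain ⟨e, F, heSM, heC, hF1, hFd, hch⟩ := hC1 (x β)
  set L := e (x β) with hLdef
  have hzmem : x β ∈ Set.Icc (0:LongRay) (x β) := ⟨longRay_zero_le _, le_rfl⟩
  have hxhn_le : ∀ n, x (h n) ≤ x β := fun n => (hmono _ _ (hhβ n) hβlt).le
  have hxhn1_lt : ∀ n, x (h n + 1) < x β := fun n => hmono _ _ (hsucclt n) hβlt
  have hImem : ∀ n, ∀ t ∈ Set.Icc (x (h n)) (x (h n + 1)), t ∈ Set.Icc (0:LongRay) (x β) :=
    fun n t ht => ⟨longRay_zero_le t, le_trans ht.2 (hxhn1_lt n).le⟩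
  have hxlt : ∀ n, x (h n) < x (h n + 1) := fun n =>
    hmono _ _ (by rw [Ordinal.add_one_eq_succ]; exact Order.lt_succ (h n)) (hsuccω _ (hlt n))
  set a : ℕ → ℝ := fun n => e (x (h n)) with hadef
  set b : ℕ → ℝ := fun n => e (x (h n + 1)) with hbdef
  have hbn_lt : ∀ n, b n < L := fun n =>
    heSM (hImem n _ ⟨(hxlt n).le, le_rfl⟩) hzmem (hxhn1_lt n)
  have hecont : ContinuousWithinAt e (Set.Icc 0 (x β)) (x β) := heC _ hzmem
  have hatend : Filter.Tendsto a Filter.atTop (nhds L) := by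
    apply hecont.tendsto.comp
    rw [tendsto_nhdsWithin_iff]
    exact ⟨htend, Filter.Eventually.of_forall fun n => ⟨longRay_zero_le _, hxhn_le n⟩⟩
  have hFdiff : Differentiable ℝ F := hF1.differentiable one_ne_zero
  have hderivcont : Continuous (deriv F) := hF1.continuous_deriv le_rfl
  have hproj : ∀ (i : Fin 3) (s : ℝ), HasDerivAt (fun t => F t i) (deriv F s i) s := by
    intro i s
    exact (ContinuousLinearMap.proj (R := ℝ) (φ := fun _ : Fin 3 => ℝ)
      i).hasFDerivAt.comp_hasDerivAt s (hFdiff s).hasDerivAt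
  have hderiv_eq : ∀ (i : Fin 3) (s : ℝ), deriv (fun t => F t i) s = deriv F s i :=
    fun i s => (hproj i s).deriv
  have echart : ∀ n, ∀ t ∈ Set.Icc (x (h n)) (x (h n + 1)), ∀ i, F (e t) i = e (f t i) := by
    intro n t ht i
    exact hch t (hImem n t ht)
      (fun j => hImem n _ (hcube (h n) (hpos n) (hlt n) t ht j)) i
  have emem : ∀ n, ∀ t ∈ Set.Icc (x (h n)) (x (h n + 1)), e t ∈ Set.Icc (a n) (b n) := by
    intro n t ht
    exact ⟨heSM.monotoneOn (hImem n _ ⟨le_rfl, (hxlt n).le⟩) (hImem n t ht) ht.1,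
           heSM.monotoneOn (hImem n t ht) (hImem n _ ⟨(hxlt n).le, le_rfl⟩) ht.2⟩
  have key : ∀ n (i : Fin 3),
      (∃ p q, p ∈ Set.Icc (a n) (b n) ∧ q ∈ Set.Icc (a n) (b n) ∧ p < q ∧ F q i < F p i) ∧
      (∃ p q, p ∈ Set.Icc (a n) (b n) ∧ q ∈ Set.Icc (a n) (b n) ∧ p < q ∧ F p i < F q i) := by
    intro n i
    have hb' := hbad n
    push_neg at hb'
    obtain ⟨hnm, hna⟩ := hb' i
    constructor
    · simp only [MonotoneOn] at hnm
      push_neg at hnm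
      obtain ⟨u, hu, v, hv, huv, hlt'⟩ := hnm
      have huv' : u < v := lt_of_le_of_ne huv
        (fun hEq => by rw [hEq] at hlt'; exact lt_irrefl _ hlt')
      refine ⟨e u, e v, emem n u hu, emem n v hv,
        heSM (hImem n u hu) (hImem n v hv) huv', ?_⟩
      rw [echart n u hu i, echart n v hv i]
      exact heSM (hImem n _ (hcube _ (hpos n) (hlt n) v hv i))
        (hImem n _ (hcube _ (hpos n) (hlt n) u hu i)) hlt'
    · simp only [AntitoneOn] at hna
      push_neg at hna
      obtain ⟨u, hu, v, hv, huv, hlt'⟩ := hna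
      have huv' : u < v := lt_of_le_of_ne huv
        (fun hEq => by rw [hEq] at hlt'; exact lt_irrefl _ hlt')
      refine ⟨e u, e v, emem n u hu, emem n v hv,
        heSM (hImem n u hu) (hImem n v hv) huv', ?_⟩
      rw [echart n u hu i, echart n v hv i]
      exact heSM (hImem n _ (hcube _ (hpos n) (hlt n) u hu i))
        (hImem n _ (hcube _ (hpos n) (hlt n) v hv i)) hlt'
  have hL0 := hFd L
  have hex : ∃ i, deriv F L i ≠ 0 := by
    by_contra hno; push_neg at hno; exact hL0 (funext hno)
  obtain ⟨i₀, hi₀⟩ := hex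
  have hGcont : Continuous fun s => deriv F s i₀ := (continuous_apply i₀).comp hderivcont
  have hFicont : ContinuousOn (fun t => F t i₀) (Set.Icc (a 0) (b 0)) :=
    ((continuous_apply i₀).comp hF1.continuous).continuousOn
  rcases hi₀.lt_or_gt with hneg | hpos'
  · have hopen : IsOpen {s : ℝ | deriv F s i₀ < 0} := isOpen_lt hGcont continuous_const
    obtain ⟨ε, hε, hball⟩ := Metric.isOpen_iff.1 hopen L hneg
    obtain ⟨N, hN⟩ := (hatend.eventually (eventually_gt_nhds
      (by linarith : L - ε < L))).exists
    have hsub : Set.Icc (a N) (b N) ⊆ Metric.ball L ε := by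
      intro s hs
      rw [Metric.mem_ball, Real.dist_eq, abs_lt]
      have := hbn_lt N
      constructor
      · linarith [hs.1]
      · linarith [hs.2]
    have hSA : StrictAntiOn (fun t => F t i₀) (Set.Icc (a N) (b N)) := by
      refine strictAntiOn_of_deriv_neg (convex_Icc _ _) ?_ ?_
      · exact ((continuous_apply i₀).comp hF1.continuous).continuousOn
      intro s hs
      rw [hderiv_eq]
      exact hball (hsub (interior_subset hs))
    obtain ⟨p, q, hp, hq, hpq, hinc⟩ := (key N i₀).2
    exact lt_asymm (hSA hp hq hpq) hinc
  · have hopen : IsOpen {s : ℝ | 0 < deriv F s i₀} := isOpen_lt continuous_const hGcont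
    obtain ⟨ε, hε, hball⟩ := Metric.isOpen_iff.1 hopen L hpos'
    obtain ⟨N, hN⟩ := (hatend.eventually (eventually_gt_nhds
      (by linarith : L - ε < L))).exists
    have hsub : Set.Icc (a N) (b N) ⊆ Metric.ball L ε := by
      intro s hs
      rw [Metric.mem_ball, Real.dist_eq, abs_lt]
      have := hbn_lt N
      constructor
      · linarith [hs.1]
      · linarith [hs.2]
    have hSM : StrictMonoOn (fun t => F t i₀) (Set.Icc (a N) (b N)) := by
      refine strictMonoOn_of_deriv_pos (convex_Icc _ _) ?_ ?_
      · exact ((continuous_apply i₀).comp hF1.continuous).continuousOn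
      intro s hs
      rw [hderiv_eq]
      exact hball (hsub (interior_subset hs))
    obtain ⟨p, q, hp, hq, hpq, hdec⟩ := (key N i₀).1
    exact lt_asymm (hSM hp hq hpq) hdec
end
end
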